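/- arXiv:2009.04032 — 2 statements merged into one kernel-verified Lean document; each statement's English description precedes it below -/
import Mathlib

section
/- Let H be positive definite and B self-adjoint n×n complex matrices, set K = H^{-1/2} B H^{-1/2}. Then for every m ≥ 0, Tr[H^{-1/2} K^{2m} H^{-1/2}] ≤ ∑_{i=1}^n σ_{n+1−i}(H)^{−2m−1} σ_i(B)^{2m}, where σ_i denotes the i-th largest singular value. -/
open Matrix Finset
open scoped ComplexOrder

/-- The singular values of a complex square matrix (in unspecified order). -/
noncomputable def sv {n : ℕ} (X : Matrix (Fin n) (Fin n) ℂ) : Fin n → ℝ :=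
  fun i => Real.sqrt ((Matrix.posSemidef_conjTranspose_mul_self X).isHermitian.eigenvalues i)

/-- Singular values arranged in increasing order. -/
noncomputable def svAsc {n : ℕ} (X : Matrix (Fin n) (Fin n) ℂ) : Fin n → ℝ :=
  sv X ∘ Tuple.sort (sv X)

/-- Singular values arranged in decreasing order. -/
noncomputable def svDesc {n : ℕ} (X : Matrix (Fin n) (Fin n) ℂ) : Fin n → ℝ :=
  fun i => svAsc X i.rev

/-- The p-th power of the p-Schatten norm: ‖X‖_p^p = ∑ σ_i(X)^p = Tr[(X*X)^{p/2}]. -/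
noncomputable def schattenPow {n : ℕ} (p : ℝ) (X : Matrix (Fin n) (Fin n) ℂ) : ℝ :=
  ∑ i, sv X i ^ p

/-- The inverse square root `H^{-1/2}` of a positive definite matrix. -/
noncomputable def invSqrt {n : ℕ} (H : Matrix (Fin n) (Fin n) ℂ) (hH : H.PosDef) :
    Matrix (Fin n) (Fin n) ℂ :=
  hH.inv.posSemidef.1.eigenvectorUnitary.1 *
    diagonal ((↑) ∘ (√·) ∘ hH.inv.posSemidef.1.eigenvalues) *
    (star hH.inv.posSemidef.1.eigenvectorUnitary : Matrix (Fin n) (Fin n) ℂ)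



open Matrix Finset

variable {R : Type*} [CommRing R] {k n : ℕ}

/-- The type of `k`-element subsets of `Fin n`. -/
abbrev KSub (n k : ℕ) := {s : Finset (Fin n) // s.card = k}

/-- The order embedding of `Fin k` into `Fin n` enumerating a `k`-element subset. -/
def kemb (S : KSub n k) : Fin k ↪o Fin n := S.1.orderEmbOfFin S.2

lemma kemb_mem (S : KSub n k) (i : Fin k) : kemb S i ∈ S.1 :=
  Finset.orderEmbOfFin_mem _ _ _

lemma image_kemb (S : KSub n k) : Finset.image (kemb S) Finset.univ = S.1 := by
  ext x
  simp only [Finset.mem_image, Finset.mem_univ, true_and]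
  constructor
  · rintro ⟨i, rfl⟩; exact kemb_mem S i
  · intro hx
    have : x ∈ Set.range (S.1.orderEmbOfFin S.2) := by
      rw [Finset.range_orderEmbOfFin]; exact hx
    obtain ⟨i, hi⟩ := this
    exact ⟨i, hi⟩

theorem cauchyBinet (A : Matrix (Fin k) (Fin n) R) (B : Matrix (Fin n) (Fin k) R) :
    det (A * B) = ∑ S : KSub n k,
      det (A.submatrix id (kemb S)) * det (B.submatrix (kemb S) id) := by
  classical
  have h1 : det (A * B) =
      ∑ r : Fin k → Fin n, (∏ i, A i (r i)) • det (fun i j => B (r i) j) := by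
    have hrow : (A * B : Matrix (Fin k) (Fin k) R) = fun i => ∑ j : Fin n, A i j • B j := by
      funext i l
      simp [Matrix.mul_apply, Finset.sum_apply]
    calc det (A * B) = detRowAlternating (fun i => ∑ j : Fin n, A i j • B j) := by
          exact congrArg _ hrow
      _ = ∑ r : Fin k → Fin n, detRowAlternating (fun i => A i (r i) • B (r i)) :=
          (detRowAlternating : ((Fin k) → R) [⋀^Fin k]→ₗ[R] R).toMultilinearMap.map_sum
            (g := fun i j => A i j • B j)
      _ = ∑ r : Fin k → Fin n, (∏ i, A i (r i)) • det (fun i j => B (r i) j) := by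
          refine Finset.sum_congr rfl fun r _ => ?_
          exact (detRowAlternating : ((Fin k) → R) [⋀^Fin k]→ₗ[R] R).toMultilinearMap.map_smul_univ
            (fun i => A i (r i)) (fun i => B (r i))
  rw [h1]
  have h2 : ∑ r : Fin k → Fin n, (∏ i, A i (r i)) • det (fun i j => B (r i) j)
      = ∑ r ∈ Finset.univ.filter (fun r : Fin k → Fin n => Function.Injective r),
          (∏ i, A i (r i)) • det (fun i j => B (r i) j) := by
    refine (Finset.sum_subset (Finset.filter_subset _ _) fun r _ hr => ?_).symm
    have hrinj : ¬ Function.Injective r := by simpa using hr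
    have : det (fun i j => B (r i) j) = 0 := by
      apply AlternatingMap.map_eq_zero_of_not_injective
      intro hinj
      exact hrinj fun i j hij => hinj (by simp [hij])
    rw [this, smul_zero]
  rw [h2]
  have h3 : ∑ r ∈ Finset.univ.filter (fun r : Fin k → Fin n => Function.Injective r),
          (∏ i, A i (r i)) • det (fun i j => B (r i) j)
      = ∑ p : KSub n k × Equiv.Perm (Fin k),
          (∏ i, A i (kemb p.1 (p.2 i))) • det (fun i j => B (kemb p.1 (p.2 i)) j) := by
    refine (Finset.sum_bij (fun p (_ : p ∈ Finset.univ) => (kemb p.1) ∘ p.2) ?_ ?_ ?_ ?_).symm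
    · intro p _
      simp only [Finset.mem_filter, Finset.mem_univ, true_and]
      exact (kemb p.1).injective.comp p.2.injective
    · intro p hp q hq h
      obtain ⟨S, σ⟩ := p
      obtain ⟨T, τ⟩ := q
      obtain rfl : S = T := by
        apply Subtype.ext
        rw [← image_kemb S, ← image_kemb T]
        have := congrArg (fun f => Finset.image f Finset.univ) h
        simpa [← Finset.image_image, Finset.image_univ_equiv] using this
      suffices hστ : σ = τ by rw [hστ]
      ext i
      exact congrArg Fin.val ((kemb S).injective (congrFun h i))
    · intro r hr
      have hrinj : Function.Injective r := by simpa using hr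
      have hScard : (Finset.image r Finset.univ).card = k := by
        rw [Finset.card_image_of_injective _ hrinj, Finset.card_univ, Fintype.card_fin]
      set S : Finset (Fin n) := Finset.image r Finset.univ with hSdef
      have hmem : ∀ i, r i ∈ S := fun i => Finset.mem_image_of_mem r (Finset.mem_univ i)
      set g : Fin k → Fin k := fun i => (S.orderIsoOfFin hScard).symm ⟨r i, hmem i⟩ with hgdef
      have hginj : Function.Injective g := by
        intro i j hij
        apply hrinj
        have h2 : ((S.orderIsoOfFin hScard) (g i) : Fin n)
            = ((S.orderIsoOfFin hScard) (g j) : Fin n) := by rw [hij]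
        rw [hgdef] at h2
        simpa [OrderIso.apply_symm_apply] using h2
      have hgbij : Function.Bijective g := (Finite.injective_iff_bijective).mp hginj
      refine ⟨⟨⟨S, hScard⟩, Equiv.ofBijective g hgbij⟩, Finset.mem_univ _, ?_⟩
      funext i
      show kemb ⟨S, hScard⟩ (g i) = r i
      show (S.orderEmbOfFin hScard) _ = r i
      rw [← Finset.coe_orderIsoOfFin_apply, hgdef]
      simp
    · intro p _
      rfl
  rw [h3, Fintype.sum_prod_type]
  refine Finset.sum_congr rfl fun S _ => ?_
  have key : ∀ σ : Equiv.Perm (Fin k),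
      det (fun i j => B (kemb S (σ i)) j)
        = (Equiv.Perm.sign σ : ℤ) • det (B.submatrix (kemb S) id) := by
    intro σ
    have : (fun i j => B (kemb S (σ i)) j)
        = (fun i => (B.submatrix (kemb S) id) i) ∘ σ := rfl
    rw [show det (fun i j => B (kemb S (σ i)) j)
        = detRowAlternating ((fun i => (B.submatrix (kemb S) id) i) ∘ ⇑σ) from rfl]
    rw [AlternatingMap.map_perm]
    simp [Units.smul_def]
    rfl
  calc ∑ σ : Equiv.Perm (Fin k),
        (∏ i, A i (kemb S (σ i))) • det (fun i j => B (kemb S (σ i)) j)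
      = (∑ σ : Equiv.Perm (Fin k), ((Equiv.Perm.sign σ : ℤ) : R)
          * ∏ i, (A.submatrix id (kemb S))ᵀ (σ i) i) * det (B.submatrix (kemb S) id) := by
        rw [Finset.sum_mul]
        refine Finset.sum_congr rfl fun σ _ => ?_
        rw [key σ]
        simp only [smul_eq_mul, zsmul_eq_mul, transpose_apply, submatrix_apply, id_eq]
        ring
    _ = det (A.submatrix id (kemb S)) * det (B.submatrix (kemb S) id) := by
        rw [← Matrix.det_apply', Matrix.det_transpose]

/-! ### Compound matrices -/

/-- The `k`-th compound (exterior power) matrix. -/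
noncomputable def cpd (k : ℕ) (X : Matrix (Fin n) (Fin n) R) :
    Matrix (KSub n k) (KSub n k) R :=
  fun S T => det (X.submatrix (kemb S) (kemb T))

lemma ksub_nonempty (h : k ≤ n) : Nonempty (KSub n k) := by
  obtain ⟨t, -, ht⟩ := Finset.exists_subset_card_eq
    (show k ≤ (Finset.univ : Finset (Fin n)).card by simpa using h)
  exact ⟨⟨t, ht⟩⟩

lemma cpd_mul (X Y : Matrix (Fin n) (Fin n) R) :
    cpd k (X * Y) = cpd k X * cpd k Y := by
  funext S T
  have hsub : (X * Y).submatrix (kemb S) (kemb T)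
      = X.submatrix (kemb S) id * Y.submatrix id (kemb T) := by
    rw [Matrix.submatrix_mul X Y (kemb S) id (kemb T) Function.bijective_id]
  rw [show cpd k (X * Y) S T = det ((X * Y).submatrix (kemb S) (kemb T)) from rfl, hsub,
    cauchyBinet]
  simp only [Matrix.submatrix_submatrix, Function.comp_id, Function.id_comp]
  rfl

lemma cpd_row_zero_of_ne {S T : KSub n k} (hST : S ≠ T) (X : Matrix (Fin n) (Fin n) R)
    (hX : ∀ i j, i ≠ j → X i j = 0) :
    det (X.submatrix (kemb S) (kemb T)) = 0 := by
  have : ∃ x, x ∈ S.1 ∧ x ∉ T.1 := by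
    by_contra hcon
    push_neg at hcon
    have hsub : S.1 ⊆ T.1 := fun x hx => hcon x hx
    exact hST (Subtype.ext (Finset.eq_of_subset_of_card_le hsub (by rw [S.2, T.2])))
  obtain ⟨x, hxS, hxT⟩ := this
  obtain ⟨a, ha⟩ : ∃ a, kemb S a = x := by
    have : x ∈ Set.range (S.1.orderEmbOfFin S.2) := by
      rw [Finset.range_orderEmbOfFin]; exact hxS
    exact this
  apply Matrix.det_eq_zero_of_row_eq_zero a
  intro j
  have : kemb S a ≠ kemb T j := by
    rw [ha]
    intro heq
    exact hxT (heq ▸ kemb_mem T j)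
  exact hX _ _ this

lemma cpd_one : cpd k (1 : Matrix (Fin n) (Fin n) R) = 1 := by
  funext S T
  by_cases hST : S = T
  · subst hST
    have : (1 : Matrix (Fin n) (Fin n) R).submatrix (kemb S) (kemb S) = 1 := by
      ext i j
      simp only [Matrix.submatrix_apply, Matrix.one_apply, (kemb S).injective.eq_iff]
    rw [show cpd k (1 : Matrix (Fin n) (Fin n) R) S S
      = det ((1 : Matrix (Fin n) (Fin n) R).submatrix (kemb S) (kemb S)) from rfl, this]
    simp [Matrix.one_apply]
  · rw [show cpd k (1 : Matrix (Fin n) (Fin n) R) S T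
      = det ((1 : Matrix (Fin n) (Fin n) R).submatrix (kemb S) (kemb T)) from rfl]
    rw [cpd_row_zero_of_ne hST _ (fun i j hij => Matrix.one_apply_ne hij)]
    exact (Matrix.one_apply_ne hST).symm

lemma cpd_diagonal (d : Fin n → R) :
    cpd k (Matrix.diagonal d) = Matrix.diagonal (fun S : KSub n k => ∏ x ∈ S.1, d x) := by
  funext S T
  by_cases hST : S = T
  · subst hST
    have hsub : (Matrix.diagonal d).submatrix (kemb S) (kemb S)
        = Matrix.diagonal (fun i => d (kemb S i)) := by
      ext i j
      by_cases hij : i = j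
      · subst hij; simp
      · rw [Matrix.submatrix_apply, Matrix.diagonal_apply_ne _ hij,
          Matrix.diagonal_apply_ne _ (fun h => hij ((kemb S).injective h))]
    rw [show cpd k (Matrix.diagonal d) S S
      = det ((Matrix.diagonal d).submatrix (kemb S) (kemb S)) from rfl, hsub,
      Matrix.det_diagonal, Matrix.diagonal_apply_eq]
    rw [← image_kemb S, Finset.prod_image (fun a _ b _ h => (kemb S).injective h)]
  · rw [show cpd k (Matrix.diagonal d) S T
      = det ((Matrix.diagonal d).submatrix (kemb S) (kemb T)) from rfl]
    rw [cpd_row_zero_of_ne hST _ (fun i j hij => Matrix.diagonal_apply_ne d hij)]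
    exact (Matrix.diagonal_apply_ne _ hST).symm

lemma cpd_pow (X : Matrix (Fin n) (Fin n) R) (j : ℕ) :
    cpd k (X ^ j) = (cpd k X) ^ j := by
  induction j with
  | zero => simpa using cpd_one
  | succ j ih => rw [pow_succ, pow_succ, cpd_mul, ih]

lemma cpd_conjTranspose (X : Matrix (Fin n) (Fin n) ℂ) :
    cpd k (Xᴴ) = (cpd k X)ᴴ := by
  funext S T
  show det ((Xᴴ).submatrix (kemb S) (kemb T)) = star (det (X.submatrix (kemb T) (kemb S)))
  rw [← Matrix.det_conjTranspose, Matrix.conjTranspose_submatrix]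

/-! ### Operator norm lemmas -/

open scoped Matrix.Norms.L2Operator

section NormLemmas

variable {ι : Type*} [Fintype ι] [DecidableEq ι]

lemma matrix_norm_one_le : ‖(1 : Matrix ι ι ℂ)‖ ≤ 1 := by
  rw [Matrix.cstar_norm_def, _root_.map_one]
  exact ContinuousLinearMap.norm_id_le

lemma unitary_norm_le (U : Matrix ι ι ℂ) (hU : Uᴴ * U = 1) : ‖U‖ ≤ 1 := by
  have h := Matrix.l2_opNorm_conjTranspose_mul_self U
  rw [hU] at h
  have h1 : ‖U‖ * ‖U‖ ≤ 1 := h ▸ matrix_norm_one_le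
  nlinarith [norm_nonneg U]

lemma euclidean_coord_le_norm (v : EuclideanSpace ℂ ι) (i : ι) : ‖v i‖ ≤ ‖v‖ := by
  rw [EuclideanSpace.norm_eq]
  rw [show ‖v i‖ = Real.sqrt (‖v i‖ ^ 2) from (Real.sqrt_sq (norm_nonneg _)).symm]
  apply Real.sqrt_le_sqrt
  exact Finset.single_le_sum (f := fun j => ‖v j‖ ^ 2) (fun j _ => sq_nonneg _)
    (Finset.mem_univ i)

lemma entry_le_norm (A : Matrix ι ι ℂ) (i j : ι) : ‖A i j‖ ≤ ‖A‖ := by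
  have h := Matrix.l2_opNorm_mulVec A (EuclideanSpace.single j (1 : ℂ))
  rw [EuclideanSpace.norm_single] at h
  rw [norm_one, mul_one] at h
  refine le_trans ?_ h
  have hx : (A *ᵥ (EuclideanSpace.single j (1 : ℂ) : EuclideanSpace ℂ ι)) = fun i' => A i' j := by
    funext i'
    have : ((EuclideanSpace.single j (1 : ℂ) : EuclideanSpace ℂ ι) : ι → ℂ) = Pi.single j 1 := rfl
    rw [show (A *ᵥ (EuclideanSpace.single j (1 : ℂ) : EuclideanSpace ℂ ι)) i'
        = (A *ᵥ Pi.single j 1) i' from rfl, Matrix.mulVec_single]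
    simp
  refine le_trans ?_ (euclidean_coord_le_norm ((EuclideanSpace.equiv ι ℂ).symm
    (A *ᵥ (EuclideanSpace.single j (1 : ℂ)))) i)
  rw [show ((EuclideanSpace.equiv ι ℂ).symm (A *ᵥ (EuclideanSpace.single j (1 : ℂ)))) i
      = (A *ᵥ (EuclideanSpace.single j (1 : ℂ) : EuclideanSpace ℂ ι)) i from rfl, hx]

lemma diagonal_norm_le (d : ι → ℂ) (c : ℝ) (hc : 0 ≤ c) (h : ∀ i, ‖d i‖ ≤ c) :
    ‖Matrix.diagonal d‖ ≤ c := by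
  rw [Matrix.l2_opNorm_def]
  apply ContinuousLinearMap.opNorm_le_bound _ hc
  intro x
  rw [LinearEquiv.trans_apply, LinearMap.coe_toContinuousLinearMap']
  rw [show ((Matrix.toEuclideanLin (Matrix.diagonal d) x : EuclideanSpace ℂ ι))
      = (WithLp.equiv 2 (ι → ℂ)).symm ((Matrix.diagonal d) *ᵥ (WithLp.equiv 2 (ι → ℂ)) x)
    from rfl]
  rw [EuclideanSpace.norm_eq, EuclideanSpace.norm_eq]
  rw [show c * Real.sqrt (∑ i, ‖x i‖ ^ 2)
      = Real.sqrt (c ^ 2 * ∑ i, ‖x i‖ ^ 2) by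
    rw [Real.sqrt_mul (sq_nonneg c), Real.sqrt_sq hc]]
  apply Real.sqrt_le_sqrt
  rw [Finset.mul_sum]
  apply Finset.sum_le_sum
  intro i _
  have : ((WithLp.equiv 2 (ι → ℂ)).symm ((Matrix.diagonal d) *ᵥ (WithLp.equiv 2 (ι → ℂ)) x)) i
      = d i * x i := by
    rw [show ((WithLp.equiv 2 (ι → ℂ)).symm ((Matrix.diagonal d) *ᵥ (WithLp.equiv 2 (ι → ℂ)) x)) i
        = ((Matrix.diagonal d) *ᵥ (x : ι → ℂ)) i from rfl]
    simp [Matrix.mulVec_diagonal]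
  rw [this, norm_mul, mul_pow]
  have h2 : ‖d i‖ ^ 2 ≤ c ^ 2 := by
    apply sq_le_sq'
    · nlinarith [norm_nonneg (d i), h i]
    · exact h i
  nlinarith [sq_nonneg ‖x i‖, norm_nonneg (x i)]

end NormLemmas

/-! ### Scalar majorization lemmas -/

section Scalar

lemma abel_nonpos : ∀ (N : ℕ) (w d : ℕ → ℝ),
    (∀ i j, i ≤ j → j < N → w j ≤ w i) → (∀ i, i < N → 0 ≤ w i) →
    (∀ k, k ≤ N → ∑ i ∈ Finset.range k, d i ≤ 0) →
    ∑ i ∈ Finset.range N, w i * d i ≤ 0 := by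
  intro N
  induction N with
  | zero => simp
  | succ N ih =>
    intro w d hmono hnn hpre
    have e1 : ∀ i ∈ Finset.range (N + 1), w i * d i = (w i - w N) * d i + w N * d i := by
      intro i _; ring
    rw [Finset.sum_congr rfl e1, Finset.sum_add_distrib]
    have h2 : ∑ i ∈ Finset.range (N + 1), w N * d i ≤ 0 := by
      rw [← Finset.mul_sum]
      exact mul_nonpos_of_nonneg_of_nonpos (hnn N (Nat.lt_succ_self N))
        (hpre (N + 1) le_rfl)
    have h3 : ∑ i ∈ Finset.range (N + 1), (w i - w N) * d i ≤ 0 := by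
      rw [Finset.sum_range_succ, sub_self, zero_mul, add_zero]
      exact ih (fun i => w i - w N) d
        (fun i j hij hj => sub_le_sub_right (hmono i j hij (hj.trans (Nat.lt_succ_self N))) _)
        (fun i hi => sub_nonneg.mpr (hmono i N hi.le (Nat.lt_succ_self N)))
        (fun k hk => hpre k (hk.trans (Nat.le_succ N)))
    linarith

lemma sum_le_of_prefix_prod_pos (a b : ℕ → ℝ) (N : ℕ)
    (ha_pos : ∀ i, i < N → 0 < a i) (hb_pos : ∀ i, i < N → 0 < b i)
    (ha_mono : ∀ i j, i ≤ j → j < N → a j ≤ a i)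
    (hprod : ∀ k, k ≤ N → ∏ i ∈ Finset.range k, a i ≤ ∏ i ∈ Finset.range k, b i) :
    ∑ i ∈ Finset.range N, a i ≤ ∑ i ∈ Finset.range N, b i := by
  have key : ∀ i, i < N → a i - b i ≤ a i * (Real.log (a i) - Real.log (b i)) := by
    intro i hi
    have ha := ha_pos i hi
    have hb := hb_pos i hi
    have h1 : Real.log (b i) - Real.log (a i) + 1 ≤ b i / a i := by
      have h := Real.add_one_le_exp (Real.log (b i) - Real.log (a i))
      rwa [Real.exp_sub, Real.exp_log hb, Real.exp_log ha] at h
    have h2 := mul_le_mul_of_nonneg_right h1 ha.le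
    rw [div_mul_cancel₀ _ (ne_of_gt ha)] at h2
    nlinarith
  have habel : ∑ i ∈ Finset.range N, a i * (Real.log (a i) - Real.log (b i)) ≤ 0 := by
    apply abel_nonpos N a (fun i => Real.log (a i) - Real.log (b i))
      ha_mono (fun i hi => (ha_pos i hi).le)
    intro k hk
    have hlog : ∀ (f : ℕ → ℝ), (∀ i, i < N → 0 < f i) →
        ∑ i ∈ Finset.range k, Real.log (f i) = Real.log (∏ i ∈ Finset.range k, f i) := by
      intro f hf
      rw [Real.log_prod]
      intro i hi
      exact ne_of_gt (hf i ((Finset.mem_range.mp hi).trans_le hk))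
    rw [Finset.sum_sub_distrib, hlog a ha_pos, hlog b hb_pos, sub_nonpos]
    apply Real.log_le_log
    · exact Finset.prod_pos fun i hi => ha_pos i ((Finset.mem_range.mp hi).trans_le hk)
    · exact hprod k hk
  have : ∑ i ∈ Finset.range N, (a i - b i) ≤ 0 := by
    refine le_trans (Finset.sum_le_sum fun i hi => key i (Finset.mem_range.mp hi)) habel
  rw [Finset.sum_sub_distrib] at this
  linarith

lemma sum_le_of_prefix_prod (a b : ℕ → ℝ) (N : ℕ)
    (ha_nn : ∀ i, 0 ≤ a i) (hb_nn : ∀ i, 0 ≤ b i)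
    (ha_mono : ∀ i j, i ≤ j → a j ≤ a i)
    (hprod : ∀ k, ∏ i ∈ Finset.range k, a i ≤ ∏ i ∈ Finset.range k, b i) :
    ∑ i ∈ Finset.range N, a i ≤ ∑ i ∈ Finset.range N, b i := by
  induction N with
  | zero => simp
  | succ N ih =>
    by_cases hA : 0 < a N
    · have ha_pos : ∀ i, i < N + 1 → 0 < a i :=
        fun i hi => lt_of_lt_of_le hA (ha_mono i N (Nat.lt_succ_iff.mp hi))
      have hb_pos : ∀ i, i < N + 1 → 0 < b i := by
        intro i hi
        rcases (hb_nn i).lt_or_eq with h | h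
        · exact h
        · exfalso
          have hz : ∏ j ∈ Finset.range (i + 1), b j = 0 :=
            Finset.prod_eq_zero (Finset.self_mem_range_succ i) h.symm
          have hp : 0 < ∏ j ∈ Finset.range (i + 1), a j :=
            Finset.prod_pos fun j hj =>
              ha_pos j ((Finset.mem_range.mp hj).trans_le hi)
          have := hprod (i + 1)
          rw [hz] at this
          exact absurd this (not_le.mpr hp)
      exact sum_le_of_prefix_prod_pos a b (N + 1) ha_pos hb_pos
        (fun i j hij _ => ha_mono i j hij) (fun k _ => hprod k)
    · have haN : a N = 0 := le_antisymm (not_lt.mp hA) (ha_nn N)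
      rw [Finset.sum_range_succ, Finset.sum_range_succ, haN, add_zero]
      exact le_trans ih (by linarith [hb_nn N])

lemma fin_strictMono_le {k n : ℕ} (g : Fin k → Fin n) (h : StrictMono g) (i : Fin k) :
    (i : ℕ) ≤ (g i : ℕ) := by
  obtain ⟨v, hv⟩ := i
  induction v with
  | zero => exact Nat.zero_le _
  | succ v ihv =>
    have hv' : v < k := Nat.lt_of_succ_lt hv
    have h1 : g ⟨v, hv'⟩ < g ⟨v + 1, hv⟩ := h (by simp [Fin.lt_def])
    have h2 := ihv hv'
    have h3 : (g ⟨v, hv'⟩ : ℕ) < (g ⟨v + 1, hv⟩ : ℕ) := h1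
    simp only [Fin.val_mk] at h2 ⊢
    omega

/-- Product over a `k`-element subset is at most the product of the `k` largest values. -/
lemma prod_subset_le {n k : ℕ} (hkn : k ≤ n) (a : Fin n → ℝ) (ha_nn : ∀ i, 0 ≤ a i)
    (ha_anti : Antitone a) (d : Fin n → ℝ) (σ : Equiv.Perm (Fin n))
    (hda : ∀ i, |d i| = a (σ i)) (S : Finset (Fin n)) (hS : S.card = k) :
    |∏ x ∈ S, d x| ≤ ∏ i : Fin k, a (Fin.castLE hkn i) := by
  rw [Finset.abs_prod]
  calc ∏ x ∈ S, |d x| = ∏ x ∈ S, a (σ x) := Finset.prod_congr rfl fun x _ => hda x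
    _ = ∏ y ∈ S.image σ, a y :=
        (Finset.prod_image fun x _ y _ h => σ.injective h).symm
    _ ≤ ∏ i : Fin k, a (Fin.castLE hkn i) := by
        have hT : (S.image σ).card = k := by
          rw [Finset.card_image_of_injective _ σ.injective, hS]
        set T := S.image σ
        rw [show T = Finset.image (kemb ⟨T, hT⟩) Finset.univ from (image_kemb ⟨T, hT⟩).symm,
          Finset.prod_image fun x _ y _ h => (kemb _).injective h]
        apply Finset.prod_le_prod (fun i _ => ha_nn _)
        intro i _
        apply ha_anti
        show Fin.castLE hkn i ≤ kemb ⟨T, hT⟩ i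
        have := fin_strictMono_le (kemb ⟨T, hT⟩) (kemb ⟨T, hT⟩).strictMono i
        exact Fin.mk_le_of_le_val this

end Scalar

/-! ### Eigenvalue multiset tools -/

section Eigen
open Polynomial

variable {n : ℕ}

lemma det_smul_one_sub_conj (x : ℂ) (U : Matrix (Fin n) (Fin n) ℂ)
    (hUU : U * Uᴴ = 1) (d : Fin n → ℝ) :
    det (x • (1 : Matrix (Fin n) (Fin n) ℂ) - U * Matrix.diagonal (fun i => (d i : ℂ)) * Uᴴ)
      = ∏ i, (x - (d i : ℂ)) := by
  have hd : x • (1 : Matrix (Fin n) (Fin n) ℂ) - Matrix.diagonal (fun i => (d i : ℂ))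
      = Matrix.diagonal (fun i => x - (d i : ℂ)) := by
    funext i j
    by_cases hij : i = j
    · subst hij
      simp [Matrix.one_apply, Matrix.diagonal_apply]
    · simp [Matrix.one_apply_ne hij, Matrix.diagonal_apply_ne _ hij]
  have h1 : x • (1 : Matrix (Fin n) (Fin n) ℂ)
        - U * Matrix.diagonal (fun i => (d i : ℂ)) * Uᴴ
      = U * (Matrix.diagonal (fun i => x - (d i : ℂ))) * Uᴴ := by
    rw [← hd, Matrix.mul_sub, Matrix.sub_mul]
    congr 1
    rw [Matrix.mul_smul, Matrix.smul_mul, mul_one, hUU]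
  rw [h1, Matrix.det_mul, Matrix.det_mul, Matrix.det_diagonal]
  have h2 : det U * det (Uᴴ) = 1 := by
    rw [← Matrix.det_mul, hUU, Matrix.det_one]
  calc (det U * ∏ i, (x - (d i : ℂ))) * det Uᴴ
      = (det U * det Uᴴ) * ∏ i, (x - (d i : ℂ)) := by ring
    _ = ∏ i, (x - (d i : ℂ)) := by rw [h2, one_mul]

lemma eig_multiset_conj (A : Matrix (Fin n) (Fin n) ℂ) (hA : A.IsHermitian)
    (U : Matrix (Fin n) (Fin n) ℂ) (hUU : U * Uᴴ = 1) (d : Fin n → ℝ)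
    (hAU : A = U * Matrix.diagonal (fun i => (d i : ℂ)) * Uᴴ) :
    Finset.univ.val.map hA.eigenvalues = Finset.univ.val.map d := by
  have hOU : (hA.eigenvectorUnitary : Matrix (Fin n) (Fin n) ℂ)
      * (hA.eigenvectorUnitary : Matrix (Fin n) (Fin n) ℂ)ᴴ = 1 := by
    rw [← Matrix.star_eq_conjTranspose]
    exact (Matrix.mem_unitaryGroup_iff).mp hA.eigenvectorUnitary.2
  have hspec : A = (hA.eigenvectorUnitary : Matrix (Fin n) (Fin n) ℂ)
      * Matrix.diagonal (fun i => (hA.eigenvalues i : ℂ))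
      * (hA.eigenvectorUnitary : Matrix (Fin n) (Fin n) ℂ)ᴴ := by
    have := hA.spectral_theorem
    rw [Unitary.conjStarAlgAut_apply] at this
    rw [← Matrix.star_eq_conjTranspose]
    exact this
  have key : ∀ x : ℂ, ∏ i, (x - (hA.eigenvalues i : ℂ)) = ∏ i, (x - (d i : ℂ)) := by
    intro x
    rw [← det_smul_one_sub_conj x _ hOU hA.eigenvalues, ← det_smul_one_sub_conj x U hUU d,
      ← hspec, ← hAU]
  have hpoly : (∏ i : Fin n, (X - C ((hA.eigenvalues i : ℂ))))
      = ∏ i : Fin n, (X - C ((d i : ℂ))) := by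
    apply Polynomial.funext
    intro x
    simpa [Polynomial.eval_prod] using key x
  have hroots : Finset.univ.val.map (fun i => (hA.eigenvalues i : ℂ))
      = Finset.univ.val.map (fun i => (d i : ℂ)) := by
    have e : ∀ f : Fin n → ℝ, (∏ i : Fin n, (X - C ((f i : ℂ))))
        = ((Finset.univ.val.map (fun i => (f i : ℂ))).map (fun a => X - C a)).prod := by
      intro f
      rw [Multiset.map_map, Finset.prod_eq_multiset_prod]
      rfl
    have := congrArg Polynomial.roots hpoly
    rwa [e, e, Polynomial.roots_multiset_prod_X_sub_C,
      Polynomial.roots_multiset_prod_X_sub_C] at this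
  have strip : ∀ f : Fin n → ℝ, Finset.univ.val.map (fun i => (f i : ℂ))
      = (Finset.univ.val.map f).map (fun a : ℝ => (a : ℂ)) := by
    intro f; rw [Multiset.map_map]; rfl
  rw [strip, strip] at hroots
  exact Multiset.map_injective Complex.ofReal_injective hroots

lemma multiset_map_comp_perm {α : Type*} (f : Fin n → α) (σ : Equiv.Perm (Fin n)) :
    Finset.univ.val.map (fun i => f (σ i)) = Finset.univ.val.map f := by
  calc Finset.univ.val.map (fun i => f (σ i))
      = (Finset.univ.val.map σ).map f := by rw [Multiset.map_map]; rfl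
    _ = Finset.univ.val.map f := by rw [Multiset.map_univ_val_equiv]

lemma sorted_tuple_unique (f g : Fin n → ℝ) (hf : Monotone f) (hg : Monotone g)
    (h : Finset.univ.val.map f = Finset.univ.val.map g) : f = g := by
  have hl : (List.ofFn f).Perm (List.ofFn g) := by
    rw [← Multiset.coe_eq_coe]
    rw [Fin.univ_val_map, Fin.univ_val_map] at h
    exact h
  exact List.ofFn_injective (List.Perm.eq_of_sortedLE (List.sortedLE_ofFn_iff.mpr hf) (List.sortedLE_ofFn_iff.mpr hg) hl)

lemma exists_perm_of_multiset_eq (f g : Fin n → ℝ)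
    (h : Finset.univ.val.map f = Finset.univ.val.map g) :
    ∃ σ : Equiv.Perm (Fin n), ∀ i, f i = g (σ i) := by
  have h1 : f ∘ Tuple.sort f = g ∘ Tuple.sort g := by
    apply sorted_tuple_unique _ _ (Tuple.monotone_sort f) (Tuple.monotone_sort g)
    calc Finset.univ.val.map (f ∘ Tuple.sort f)
        = Finset.univ.val.map f := multiset_map_comp_perm f (Tuple.sort f)
      _ = Finset.univ.val.map g := h
      _ = Finset.univ.val.map (g ∘ Tuple.sort g) :=
          (multiset_map_comp_perm g (Tuple.sort g)).symm
  refine ⟨(Tuple.sort f).symm.trans (Tuple.sort g), fun i => ?_⟩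
  have h2 := congrFun h1 ((Tuple.sort f).symm i)
  simpa using h2

end Eigen

/-! ### Compound norm bounds via spectral decomposition -/

section CpdNorm
open scoped Matrix.Norms.L2Operator

variable {n : ℕ}

lemma evU_star_mul {A : Matrix (Fin n) (Fin n) ℂ} (hA : A.IsHermitian) :
    (hA.eigenvectorUnitary : Matrix (Fin n) (Fin n) ℂ)ᴴ
      * (hA.eigenvectorUnitary : Matrix (Fin n) (Fin n) ℂ) = 1 := by
  rw [← Matrix.star_eq_conjTranspose]
  exact (Matrix.mem_unitaryGroup_iff').mp hA.eigenvectorUnitary.2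

lemma evU_mul_star {A : Matrix (Fin n) (Fin n) ℂ} (hA : A.IsHermitian) :
    (hA.eigenvectorUnitary : Matrix (Fin n) (Fin n) ℂ)
      * (hA.eigenvectorUnitary : Matrix (Fin n) (Fin n) ℂ)ᴴ = 1 := by
  rw [← Matrix.star_eq_conjTranspose]
  exact (Matrix.mem_unitaryGroup_iff).mp hA.eigenvectorUnitary.2

lemma spectral_decomp (A : Matrix (Fin n) (Fin n) ℂ) (hA : A.IsHermitian) :
    A = (hA.eigenvectorUnitary : Matrix (Fin n) (Fin n) ℂ)
      * Matrix.diagonal (fun i => (hA.eigenvalues i : ℂ))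
      * (hA.eigenvectorUnitary : Matrix (Fin n) (Fin n) ℂ)ᴴ := by
  have := hA.spectral_theorem
  rw [Unitary.conjStarAlgAut_apply] at this
  rw [← Matrix.star_eq_conjTranspose]
  exact this

lemma norm_triple {ι : Type*} [Fintype ι] [DecidableEq ι] (a b c : Matrix ι ι ℂ)
    (ha : ‖a‖ ≤ 1) (hc : ‖c‖ ≤ 1) : ‖a * b * c‖ ≤ ‖b‖ := by
  have h1 : ‖a * b * c‖ ≤ ‖a * b‖ * ‖c‖ := Matrix.l2_opNorm_mul _ _
  have h2 : ‖a * b‖ ≤ ‖a‖ * ‖b‖ := Matrix.l2_opNorm_mul _ _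
  nlinarith [norm_nonneg a, norm_nonneg b, norm_nonneg c, norm_nonneg (a * b)]

lemma matrix_norm_pow_le {ι : Type*} [Fintype ι] [DecidableEq ι] (x : Matrix ι ι ℂ) (j : ℕ) :
    ‖x ^ j‖ ≤ ‖x‖ ^ j := by
  induction j with
  | zero => simpa using matrix_norm_one_le
  | succ j ih =>
    rw [pow_succ, pow_succ]
    calc ‖x ^ j * x‖ ≤ ‖x ^ j‖ * ‖x‖ := Matrix.l2_opNorm_mul _ _
      _ ≤ ‖x‖ ^ j * ‖x‖ :=
          mul_le_mul_of_nonneg_right ih (norm_nonneg x)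

lemma cpd_unitary_norm_le {k : ℕ} (U : Matrix (Fin n) (Fin n) ℂ)
    (hU : Uᴴ * U = 1) : ‖cpd k U‖ ≤ 1 := by
  apply unitary_norm_le
  rw [← cpd_conjTranspose, ← cpd_mul, hU, cpd_one]

lemma cpd_hermitian_norm_le {k : ℕ} (A : Matrix (Fin n) (Fin n) ℂ) (hA : A.IsHermitian)
    (c : ℝ) (hc : 0 ≤ c)
    (hbound : ∀ S : KSub n k, |∏ x ∈ S.1, hA.eigenvalues x| ≤ c) :
    ‖cpd k A‖ ≤ c := by
  have hd : cpd k A = cpd k (hA.eigenvectorUnitary : Matrix (Fin n) (Fin n) ℂ)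
      * cpd k (Matrix.diagonal (fun i => (hA.eigenvalues i : ℂ)))
      * cpd k ((hA.eigenvectorUnitary : Matrix (Fin n) (Fin n) ℂ)ᴴ) := by
    rw [← cpd_mul, ← cpd_mul, ← spectral_decomp A hA]
  rw [hd]
  refine le_trans (norm_triple _ _ _ ?_ ?_) ?_
  · exact cpd_unitary_norm_le _ (evU_star_mul hA)
  · apply cpd_unitary_norm_le
    rw [Matrix.conjTranspose_conjTranspose]
    exact evU_mul_star hA
  · rw [cpd_diagonal]
    apply diagonal_norm_le _ _ hc
    intro S
    rw [show (∏ x ∈ S.1, ((hA.eigenvalues x : ℝ) : ℂ))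
        = ((∏ x ∈ S.1, hA.eigenvalues x : ℝ) : ℂ) by push_cast; rfl]
    rw [Complex.norm_real, Real.norm_eq_abs]
    exact hbound S

lemma prod_top_eigs_le (M : Matrix (Fin n) (Fin n) ℂ) (hM : M.IsHermitian) {k : ℕ}
    (S : KSub n k) (c : ℝ) (hnorm : ‖cpd k M‖ ≤ c) :
    ∏ x ∈ S.1, hM.eigenvalues x ≤ c := by
  set U : Matrix (Fin n) (Fin n) ℂ := (hM.eigenvectorUnitary : Matrix (Fin n) (Fin n) ℂ)
    with hUdef
  have hdiag : Uᴴ * M * U = Matrix.diagonal (fun i => (hM.eigenvalues i : ℂ)) := by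
    have h2 : Uᴴ * M * U
        = Uᴴ * ((U * Matrix.diagonal (fun i => (hM.eigenvalues i : ℂ)) * Uᴴ)) * U :=
      congrArg (fun Z => Uᴴ * Z * U) (spectral_decomp M hM)
    rw [h2]
    calc Uᴴ * (U * Matrix.diagonal (fun i => (hM.eigenvalues i : ℂ)) * Uᴴ) * U
        = (Uᴴ * U) * Matrix.diagonal (fun i => (hM.eigenvalues i : ℂ)) * (Uᴴ * U) := by
          simp only [Matrix.mul_assoc]
      _ = Matrix.diagonal (fun i => (hM.eigenvalues i : ℂ)) := by
          rw [evU_star_mul hM, Matrix.one_mul, Matrix.mul_one]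
  have entry : (cpd k (Uᴴ * M * U)) S S = ((∏ x ∈ S.1, hM.eigenvalues x : ℝ) : ℂ) := by
    rw [hdiag, cpd_diagonal, Matrix.diagonal_apply_eq]
    push_cast
    rfl
  have hb : ‖cpd k (Uᴴ * M * U)‖ ≤ c := by
    rw [cpd_mul, cpd_mul]
    refine le_trans (norm_triple _ _ _ ?_ ?_) hnorm
    · apply cpd_unitary_norm_le
      rw [Matrix.conjTranspose_conjTranspose]
      exact evU_mul_star hM
    · exact cpd_unitary_norm_le _ (evU_star_mul hM)
  calc ∏ x ∈ S.1, hM.eigenvalues x ≤ |∏ x ∈ S.1, hM.eigenvalues x| := le_abs_self _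
    _ = ‖((∏ x ∈ S.1, hM.eigenvalues x : ℝ) : ℂ)‖ := by
        rw [Complex.norm_real, Real.norm_eq_abs]
    _ = ‖(cpd k (Uᴴ * M * U)) S S‖ := by rw [entry]
    _ ≤ ‖cpd k (Uᴴ * M * U)‖ := entry_le_norm _ _ _
    _ ≤ c := hb

end CpdNorm

/-! ### Final assembly -/

section Final
open scoped Matrix.Norms.L2Operator ComplexOrder

theorem trace_conjugated_even_power_bound {n : ℕ}
    (H B : Matrix (Fin n) (Fin n) ℂ) (hH : H.PosDef) (hB : B.IsHermitian) (m : ℕ) :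
    ((invSqrt H hH *
        (invSqrt H hH * B * invSqrt H hH) ^ (2 * m) * invSqrt H hH).trace).re ≤
      ∑ i : Fin n, (svAsc H i)⁻¹ ^ (2 * m + 1) * svDesc B i ^ (2 * m) := by
  show (((invSqrt H hH) *
        ((invSqrt H hH) * B * (invSqrt H hH)) ^ (2 * m)
          * (invSqrt H hH)).trace).re ≤
      ∑ i : Fin n, (svAsc H i)⁻¹ ^ (2 * m + 1) * svDesc B i ^ (2 * m)
  classical
  set R : Matrix (Fin n) (Fin n) ℂ := invSqrt H hH with hRdef
  have hRboth : (invSqrt H hH).IsHermitian ∧ invSqrt H hH * invSqrt H hH = H⁻¹ := by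
    set U : Matrix (Fin n) (Fin n) ℂ := hH.inv.posSemidef.1.eigenvectorUnitary.1 with hU
    have hUU : star U * U = 1 := Unitary.coe_star_mul_self _
    constructor
    · show (U * _ * star U)ᴴ = U * _ * star U
      rw [← Matrix.star_eq_conjTranspose, star_mul, star_mul, star_star,
        Matrix.star_eq_conjTranspose, Matrix.diagonal_conjTranspose, Matrix.mul_assoc]
      congr 3
      funext i
      simp
    · show U * _ * star U * (U * _ * star U) = H⁻¹
      have hs := hH.inv.posSemidef.1.spectral_theorem
      rw [Unitary.conjStarAlgAut_apply] at hs
      conv_rhs => rw [hs]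
      rw [show U * diagonal ((↑) ∘ (√·) ∘ hH.inv.posSemidef.1.eigenvalues) * star U *
          (U * diagonal ((↑) ∘ (√·) ∘ hH.inv.posSemidef.1.eigenvalues) * star U)
          = U * (diagonal ((↑) ∘ (√·) ∘ hH.inv.posSemidef.1.eigenvalues) * (star U * U) *
          diagonal ((↑) ∘ (√·) ∘ hH.inv.posSemidef.1.eigenvalues)) * star U by
        simp only [Matrix.mul_assoc]]
      rw [hUU, Matrix.mul_one, Matrix.diagonal_mul_diagonal]
      congr 3
      funext i
      simp only [Function.comp]
      rw [← Complex.ofReal_mul, Real.mul_self_sqrt (hH.inv.posSemidef.eigenvalues_nonneg i)]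
      rfl
  have hRherm : R.IsHermitian := hRboth.1
  have hRR : R * R = H⁻¹ := hRboth.2
  set M : Matrix (Fin n) (Fin n) ℂ := R * (R * B * R) ^ (2 * m) * R with hMdef
  -- M is PSD
  have hRBRherm : (R * B * R)ᴴ = R * B * R := by
    simp only [Matrix.conjTranspose_mul, hRherm.eq, hB.eq, Matrix.mul_assoc]
  have hXherm : ((R * B * R) ^ m * R)ᴴ = R * (R * B * R) ^ m := by
    rw [Matrix.conjTranspose_mul, Matrix.conjTranspose_pow, hRBRherm, hRherm.eq]
  have hXform : M = ((R * B * R) ^ m * R)ᴴ * ((R * B * R) ^ m * R) := by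
    rw [hXherm, hMdef, two_mul, pow_add]
    simp only [Matrix.mul_assoc]
  have hMpsd : M.PosSemidef := by
    rw [hXform]; exact Matrix.posSemidef_conjTranspose_mul_self _
  have hMherm : M.IsHermitian := hMpsd.1
  -- product form
  have hshift : ∀ j : ℕ, (R * B * R) ^ j * R = R * (B * H⁻¹) ^ j := by
    intro j
    induction j with
    | zero => simp
    | succ j ih =>
      calc (R * B * R) ^ (j + 1) * R = (R * B * R) ^ j * R * (B * (R * R)) := by
            rw [pow_succ]
            simp only [Matrix.mul_assoc]
        _ = R * (B * H⁻¹) ^ j * (B * H⁻¹) := by rw [ih, hRR]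
        _ = R * (B * H⁻¹) ^ (j + 1) := by
            rw [pow_succ]
            simp only [Matrix.mul_assoc]
  have hMform : M = H⁻¹ * (B * H⁻¹) ^ (2 * m) := by
    calc M = R * ((R * B * R) ^ (2 * m) * R) := by rw [hMdef, Matrix.mul_assoc]
      _ = R * (R * (B * H⁻¹) ^ (2 * m)) := by rw [hshift]
      _ = (R * R) * (B * H⁻¹) ^ (2 * m) := by rw [Matrix.mul_assoc]
      _ = H⁻¹ * (B * H⁻¹) ^ (2 * m) := by rw [hRR]
  -- eigenvalue tuples
  set eM : Fin n → ℝ := hMherm.eigenvalues with heMdef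
  set eP : Fin n → ℝ := hH.inv.1.eigenvalues with hePdef
  set eB : Fin n → ℝ := hB.eigenvalues with heBdef
  set eH : Fin n → ℝ := hH.1.eigenvalues with heHdef
  have heHpos : ∀ i, 0 < eH i := fun i => hH.eigenvalues_pos i
  set O : Matrix (Fin n) (Fin n) ℂ := (hH.1.eigenvectorUnitary : Matrix (Fin n) (Fin n) ℂ)
    with hOdef
  -- multiset identity for P = H⁻¹
  have hPO : H⁻¹ = O * Matrix.diagonal (fun i => (((eH i)⁻¹ : ℝ) : ℂ)) * Oᴴ := by
    apply Matrix.inv_eq_right_inv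
    have hH' := spectral_decomp H hH.1
    calc H * (O * Matrix.diagonal (fun i => (((eH i)⁻¹ : ℝ) : ℂ)) * Oᴴ)
        = (O * Matrix.diagonal (fun i => ((eH i : ℝ) : ℂ)) * Oᴴ)
          * (O * Matrix.diagonal (fun i => (((eH i)⁻¹ : ℝ) : ℂ)) * Oᴴ) := by rw [← hH']
      _ = O * (Matrix.diagonal (fun i => ((eH i : ℝ) : ℂ)) * ((Oᴴ * O)
          * Matrix.diagonal (fun i => (((eH i)⁻¹ : ℝ) : ℂ)) * Oᴴ)) := by
          simp only [Matrix.mul_assoc]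
      _ = O * (Matrix.diagonal (fun i => ((eH i : ℝ) : ℂ))
          * Matrix.diagonal (fun i => (((eH i)⁻¹ : ℝ) : ℂ))) * Oᴴ := by
          rw [evU_star_mul hH.1, Matrix.one_mul]
          simp only [Matrix.mul_assoc]
      _ = O * Oᴴ := by
          rw [Matrix.diagonal_mul_diagonal]
          have : (fun i => ((eH i : ℝ) : ℂ) * (((eH i)⁻¹ : ℝ) : ℂ)) = fun _ => (1 : ℂ) := by
            funext i
            rw [Complex.ofReal_inv]
            exact mul_inv_cancel₀ (Complex.ofReal_ne_zero.mpr (ne_of_gt (heHpos i)))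
          rw [this, Matrix.diagonal_one, Matrix.mul_one]
      _ = 1 := evU_mul_star hH.1
  have mult_P : Finset.univ.val.map eP = Finset.univ.val.map (fun i => (eH i)⁻¹) :=
    eig_multiset_conj (H⁻¹) hH.inv.1 O (evU_mul_star hH.1) (fun i => (eH i)⁻¹) hPO
  -- multiset identity for HᴴH
  have hHH : Hᴴ * H = O * Matrix.diagonal (fun i => ((eH i ^ 2 : ℝ) : ℂ)) * Oᴴ := by
    have hH' := spectral_decomp H hH.1
    calc Hᴴ * H = H * H := by rw [hH.1.eq]
      _ = (O * Matrix.diagonal (fun i => ((eH i : ℝ) : ℂ)) * Oᴴ)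
          * (O * Matrix.diagonal (fun i => ((eH i : ℝ) : ℂ)) * Oᴴ) := by rw [← hH']
      _ = O * (Matrix.diagonal (fun i => ((eH i : ℝ) : ℂ)) * ((Oᴴ * O)
          * Matrix.diagonal (fun i => ((eH i : ℝ) : ℂ)) * Oᴴ)) := by
          simp only [Matrix.mul_assoc]
      _ = O * (Matrix.diagonal (fun i => ((eH i : ℝ) : ℂ))
          * Matrix.diagonal (fun i => ((eH i : ℝ) : ℂ))) * Oᴴ := by
          rw [evU_star_mul hH.1, Matrix.one_mul]
          simp only [Matrix.mul_assoc]
      _ = O * Matrix.diagonal (fun i => ((eH i ^ 2 : ℝ) : ℂ)) * Oᴴ := by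
          rw [Matrix.diagonal_mul_diagonal]
          congr 2
          funext i
          push_cast
          ring
  have mult_H2 : Finset.univ.val.map
        ((Matrix.posSemidef_conjTranspose_mul_self H).isHermitian.eigenvalues)
      = Finset.univ.val.map (fun i => eH i ^ 2) :=
    eig_multiset_conj (Hᴴ * H) (Matrix.posSemidef_conjTranspose_mul_self H).isHermitian
      O (evU_mul_star hH.1) (fun i => eH i ^ 2) hHH
  -- multiset identity for BᴴB
  set OB : Matrix (Fin n) (Fin n) ℂ := (hB.eigenvectorUnitary : Matrix (Fin n) (Fin n) ℂ)
    with hOBdef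
  have hBB : Bᴴ * B = OB * Matrix.diagonal (fun i => ((eB i ^ 2 : ℝ) : ℂ)) * OBᴴ := by
    have hB' := spectral_decomp B hB
    calc Bᴴ * B = B * B := by rw [hB.eq]
      _ = (OB * Matrix.diagonal (fun i => ((eB i : ℝ) : ℂ)) * OBᴴ)
          * (OB * Matrix.diagonal (fun i => ((eB i : ℝ) : ℂ)) * OBᴴ) := by rw [← hB']
      _ = OB * (Matrix.diagonal (fun i => ((eB i : ℝ) : ℂ)) * ((OBᴴ * OB)
          * Matrix.diagonal (fun i => ((eB i : ℝ) : ℂ)) * OBᴴ)) := by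
          simp only [Matrix.mul_assoc]
      _ = OB * (Matrix.diagonal (fun i => ((eB i : ℝ) : ℂ))
          * Matrix.diagonal (fun i => ((eB i : ℝ) : ℂ))) * OBᴴ := by
          rw [evU_star_mul hB, Matrix.one_mul]
          simp only [Matrix.mul_assoc]
      _ = OB * Matrix.diagonal (fun i => ((eB i ^ 2 : ℝ) : ℂ)) * OBᴴ := by
          rw [Matrix.diagonal_mul_diagonal]
          congr 2
          funext i
          push_cast
          ring
  have mult_B2 : Finset.univ.val.map
        ((Matrix.posSemidef_conjTranspose_mul_self B).isHermitian.eigenvalues)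
      = Finset.univ.val.map (fun i => eB i ^ 2) :=
    eig_multiset_conj (Bᴴ * B) (Matrix.posSemidef_conjTranspose_mul_self B).isHermitian
      OB (evU_mul_star hB) (fun i => eB i ^ 2) hBB
  -- sv multiset conversions
  have mult_svH : Finset.univ.val.map (sv H) = Finset.univ.val.map eH := by
    calc Finset.univ.val.map (sv H)
        = (Finset.univ.val.map
            ((Matrix.posSemidef_conjTranspose_mul_self H).isHermitian.eigenvalues)).map
            Real.sqrt := by rw [Multiset.map_map]; rfl
      _ = (Finset.univ.val.map (fun i => eH i ^ 2)).map Real.sqrt := by rw [mult_H2]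
      _ = Finset.univ.val.map (fun i => Real.sqrt (eH i ^ 2)) := by rw [Multiset.map_map]; rfl
      _ = Finset.univ.val.map eH := by
          apply Multiset.map_congr rfl
          intro i _
          rw [Real.sqrt_sq_eq_abs, abs_of_pos (heHpos i)]
  have mult_svB : Finset.univ.val.map (sv B) = Finset.univ.val.map (fun i => |eB i|) := by
    calc Finset.univ.val.map (sv B)
        = (Finset.univ.val.map
            ((Matrix.posSemidef_conjTranspose_mul_self B).isHermitian.eigenvalues)).map
            Real.sqrt := by rw [Multiset.map_map]; rfl
      _ = (Finset.univ.val.map (fun i => eB i ^ 2)).map Real.sqrt := by rw [mult_B2]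
      _ = Finset.univ.val.map (fun i => Real.sqrt (eB i ^ 2)) := by rw [Multiset.map_map]; rfl
      _ = Finset.univ.val.map (fun i => |eB i|) := by
          apply Multiset.map_congr rfl
          intro i _
          rw [Real.sqrt_sq_eq_abs]
  -- positivity of sv H values
  have hsvHpos : ∀ i, 0 < sv H i := by
    intro i
    have hmem : (Matrix.posSemidef_conjTranspose_mul_self H).isHermitian.eigenvalues i
        ∈ Finset.univ.val.map
          ((Matrix.posSemidef_conjTranspose_mul_self H).isHermitian.eigenvalues) :=
      Multiset.mem_map_of_mem _ (Finset.mem_univ_val i)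
    rw [mult_H2] at hmem
    obtain ⟨j, _, hj⟩ := Multiset.mem_map.mp hmem
    have hpos : 0 < (Matrix.posSemidef_conjTranspose_mul_self H).isHermitian.eigenvalues i := by
      rw [← hj]; exact pow_pos (heHpos j) 2
    exact Real.sqrt_pos.mpr hpos
  have hsvAscMono : Monotone (svAsc H) := Tuple.monotone_sort (sv H)
  have hsvAscPos : ∀ i, 0 < svAsc H i := fun i => hsvHpos _
  have hsvAscBMono : Monotone (svAsc B) := Tuple.monotone_sort (sv B)
  -- a and b tuples
  set aH : Fin n → ℝ := fun i => (svAsc H i)⁻¹ with haHdef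
  set bD : Fin n → ℝ := svDesc B with hbDdef
  have haHpos : ∀ i, 0 < aH i := fun i => inv_pos.mpr (hsvAscPos i)
  have haHnn : ∀ i, 0 ≤ aH i := fun i => (haHpos i).le
  have haHanti : Antitone aH := by
    intro i j hij
    exact inv_anti₀ (hsvAscPos i) (hsvAscMono hij)
  have hbDnn : ∀ i, 0 ≤ bD i := fun i => Real.sqrt_nonneg _
  have hbDanti : Antitone bD := by
    intro i j hij
    exact hsvAscBMono (Fin.rev_le_rev.mpr hij)
  -- permutations
  have hmult_aH : Finset.univ.val.map eP = Finset.univ.val.map aH := by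
    calc Finset.univ.val.map eP = Finset.univ.val.map (fun i => (eH i)⁻¹) := mult_P
      _ = (Finset.univ.val.map eH).map (fun t => t⁻¹) := by rw [Multiset.map_map]; rfl
      _ = (Finset.univ.val.map (sv H)).map (fun t => t⁻¹) := by rw [mult_svH]
      _ = Finset.univ.val.map (fun i => (sv H i)⁻¹) := by rw [Multiset.map_map]; rfl
      _ = Finset.univ.val.map (fun i => (sv H (Tuple.sort (sv H) i))⁻¹) :=
          (multiset_map_comp_perm (fun i => (sv H i)⁻¹) (Tuple.sort (sv H))).symm
      _ = Finset.univ.val.map aH := rfl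
  obtain ⟨σP, hσP⟩ := exists_perm_of_multiset_eq eP aH hmult_aH
  have hmult_bD : Finset.univ.val.map (fun i => |eB i|) = Finset.univ.val.map bD := by
    calc Finset.univ.val.map (fun i => |eB i|)
        = Finset.univ.val.map (sv B) := mult_svB.symm
      _ = Finset.univ.val.map (svAsc B) :=
          (multiset_map_comp_perm (sv B) (Tuple.sort (sv B))).symm
      _ = Finset.univ.val.map (fun i => svAsc B (Fin.revPerm i)) :=
          (multiset_map_comp_perm (svAsc B) Fin.revPerm).symm
      _ = Finset.univ.val.map bD := rfl
  obtain ⟨σB, hσB⟩ := exists_perm_of_multiset_eq (fun i => |eB i|) bD hmult_bD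
  -- descending eigenvalues of M
  set lam : Fin n → ℝ := fun i => eM (Tuple.sort eM i.rev) with hlamdef
  have hlamnn : ∀ i, 0 ≤ lam i := fun i => hMpsd.eigenvalues_nonneg _
  have hlamanti : Antitone lam := by
    intro i j hij
    exact Tuple.monotone_sort eM (Fin.rev_le_rev.mpr hij)
  set g : Fin n → ℝ := fun i => aH i ^ (2 * m + 1) * bD i ^ (2 * m) with hgdef
  have hgnn : ∀ i, 0 ≤ g i := fun i =>
    mul_nonneg (pow_nonneg (haHnn i) _) (pow_nonneg (hbDnn i) _)
  have hganti : Antitone g := by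
    intro i j hij
    apply mul_le_mul
    · exact pow_le_pow_left₀ (haHnn j) (haHanti hij) _
    · exact pow_le_pow_left₀ (hbDnn j) (hbDanti hij) _
    · exact pow_nonneg (hbDnn j) _
    · exact pow_nonneg (haHnn i) _
  -- natural-number sequences
  set A' : ℕ → ℝ := fun i => if h : i < n then lam ⟨i, h⟩ else 0 with hA'def
  set G' : ℕ → ℝ := fun i => if h : i < n then g ⟨i, h⟩ else 0 with hG'def
  have hA'nn : ∀ i, 0 ≤ A' i := by
    intro i
    simp only [hA'def]
    split
    · exact hlamnn _
    · exact le_refl 0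
  have hG'nn : ∀ i, 0 ≤ G' i := by
    intro i
    simp only [hG'def]
    split
    · exact hgnn _
    · exact le_refl 0
  have hA'anti : ∀ i j : ℕ, i ≤ j → A' j ≤ A' i := by
    intro i j hij
    simp only [hA'def]
    by_cases hj : j < n
    · have hi : i < n := lt_of_le_of_lt hij hj
      rw [dif_pos hj, dif_pos hi]
      exact hlamanti (by exact hij)
    · rw [dif_neg hj]
      exact hA'nn i
  -- the prefix product inequality
  have hprefix : ∀ k : ℕ, ∏ i ∈ Finset.range k, A' i ≤ ∏ i ∈ Finset.range k, G' i := by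
    intro k
    by_cases hkn : k ≤ n
    · -- convert to Fin k products
      have hAconv : ∏ i ∈ Finset.range k, A' i = ∏ i : Fin k, lam (Fin.castLE hkn i) := by
        rw [Finset.prod_range fun i => A' i]
        refine Finset.prod_congr rfl fun i _ => ?_
        simp only [hA'def]
        rw [dif_pos (lt_of_lt_of_le i.2 hkn)]
        exact congrArg lam (Fin.ext rfl)
      have hGconv : ∏ i ∈ Finset.range k, G' i = ∏ i : Fin k, g (Fin.castLE hkn i) := by
        rw [Finset.prod_range fun i => G' i]
        refine Finset.prod_congr rfl fun i _ => ?_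
        simp only [hG'def]
        rw [dif_pos (lt_of_lt_of_le i.2 hkn)]
        exact congrArg g (Fin.ext rfl)
      rw [hAconv, hGconv]
      -- the subset of top-k eigenvalue indices
      have hinj : Function.Injective
          (fun i : Fin k => Tuple.sort eM (Fin.rev (Fin.castLE hkn i))) := by
        intro i j hij
        exact Fin.castLE_injective hkn
          (Fin.rev_injective ((Tuple.sort eM).injective hij))
      have hScard : (Finset.image
          (fun i : Fin k => Tuple.sort eM (Fin.rev (Fin.castLE hkn i))) Finset.univ).card
            = k := by
        rw [Finset.card_image_of_injective _ hinj, Finset.card_univ, Fintype.card_fin]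
      set S : KSub n k := ⟨_, hScard⟩ with hSdef
      have hprodS : ∏ x ∈ S.1, eM x = ∏ i : Fin k, lam (Fin.castLE hkn i) := by
        rw [hSdef]
        rw [Finset.prod_image (fun x _ y _ h => hinj h)]
      set cP : ℝ := ∏ i : Fin k, aH (Fin.castLE hkn i) with hcPdef
      set cB : ℝ := ∏ i : Fin k, bD (Fin.castLE hkn i) with hcBdef
      have hcPnn : 0 ≤ cP := Finset.prod_nonneg fun i _ => haHnn _
      have hcBnn : 0 ≤ cB := Finset.prod_nonneg fun i _ => hbDnn _
      have hcpdP : ‖cpd k H⁻¹‖ ≤ cP := by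
        apply cpd_hermitian_norm_le _ hH.inv.1 _ hcPnn
        intro S'
        apply prod_subset_le hkn aH haHnn haHanti eP σP _ S'.1 S'.2
        intro i
        rw [hσP i, abs_of_nonneg (haHnn _)]
      have hcpdB : ‖cpd k B‖ ≤ cB := by
        apply cpd_hermitian_norm_le _ hB _ hcBnn
        intro S'
        exact prod_subset_le hkn bD hbDnn hbDanti eB σB hσB S'.1 S'.2
      have hcpdM : cpd k M = cpd k H⁻¹ * (cpd k B * cpd k H⁻¹) ^ (2 * m) := by
        rw [hMform, cpd_mul, cpd_pow, cpd_mul]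
      have h1 : ‖cpd k B * cpd k H⁻¹‖ ≤ cB * cP :=
        le_trans (Matrix.l2_opNorm_mul _ _)
          (mul_le_mul hcpdB hcpdP (norm_nonneg _) hcBnn)
      have h2 : ‖(cpd k B * cpd k H⁻¹) ^ (2 * m)‖ ≤ (cB * cP) ^ (2 * m) :=
        le_trans (matrix_norm_pow_le _ _) (pow_le_pow_left₀ (norm_nonneg _) h1 _)
      have hnormM : ‖cpd k M‖ ≤ cP * (cB * cP) ^ (2 * m) := by
        rw [hcpdM]
        exact le_trans (Matrix.l2_opNorm_mul _ _)
          (mul_le_mul hcpdP h2 (norm_nonneg _) hcPnn)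
      have hks : ∏ x ∈ S.1, eM x ≤ cP * (cB * cP) ^ (2 * m) :=
        prod_top_eigs_le M hMherm S _ hnormM
      have hRHS : ∏ i : Fin k, g (Fin.castLE hkn i) = cP * (cB * cP) ^ (2 * m) := by
        simp only [hgdef]
        rw [Finset.prod_mul_distrib, Finset.prod_pow, Finset.prod_pow, ← hcPdef, ← hcBdef,
          mul_pow]
        ring
      rw [hRHS, ← hprodS]
      exact hks
    · -- k > n : left side is zero
      push_neg at hkn
      have hz : ∏ i ∈ Finset.range k, A' i = 0 := by
        apply Finset.prod_eq_zero (Finset.mem_range.mpr hkn)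
        simp only [hA'def]
        rw [dif_neg (lt_irrefl n)]
      rw [hz]
      exact Finset.prod_nonneg fun i _ => hG'nn i
  -- apply the master lemma
  have hmaster : ∑ i ∈ Finset.range n, A' i ≤ ∑ i ∈ Finset.range n, G' i :=
    sum_le_of_prefix_prod A' G' n hA'nn hG'nn hA'anti hprefix
  -- convert sums
  have hsumA : ∑ i ∈ Finset.range n, A' i = ∑ i : Fin n, eM i := by
    rw [Finset.sum_range fun i => A' i]
    calc ∑ i : Fin n, A' i.val = ∑ i : Fin n, lam i := by
          refine Finset.sum_congr rfl fun i _ => ?_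
          simp only [hA'def]
          rw [dif_pos i.2]
      _ = ∑ i : Fin n, eM ((Fin.revPerm.trans (Tuple.sort eM)) i) := by
          refine Finset.sum_congr rfl fun i _ => ?_
          simp [hlamdef, Equiv.trans_apply]
      _ = ∑ i : Fin n, eM i := Equiv.sum_comp _ _
  have hsumG : ∑ i ∈ Finset.range n, G' i = ∑ i : Fin n, g i := by
    rw [Finset.sum_range fun i => G' i]
    refine Finset.sum_congr rfl fun i _ => ?_
    simp only [hG'def]
    rw [dif_pos i.2]
  -- trace
  have htr : M.trace = ((∑ i, eM i : ℝ) : ℂ) := by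
    have h1 : M.trace = ((hMherm.eigenvectorUnitary : Matrix (Fin n) (Fin n) ℂ)
        * Matrix.diagonal (fun i => (eM i : ℂ))
        * (hMherm.eigenvectorUnitary : Matrix (Fin n) (Fin n) ℂ)ᴴ).trace :=
      congrArg Matrix.trace (spectral_decomp M hMherm)
    have h2 : ((hMherm.eigenvectorUnitary : Matrix (Fin n) (Fin n) ℂ)
        * Matrix.diagonal (fun i => (eM i : ℂ))
        * (hMherm.eigenvectorUnitary : Matrix (Fin n) (Fin n) ℂ)ᴴ).trace
        = (Matrix.diagonal (fun i => (eM i : ℂ))).trace := by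
      rw [Matrix.trace_mul_cycle, evU_star_mul hMherm, Matrix.one_mul]
    rw [h1, h2, Matrix.trace_diagonal]
    push_cast
    rfl
  rw [htr, Complex.ofReal_re]
  calc ∑ i, eM i = ∑ i ∈ Finset.range n, A' i := hsumA.symm
    _ ≤ ∑ i ∈ Finset.range n, G' i := hmaster
    _ = ∑ i : Fin n, g i := hsumG

end Final
end

section
/- For any n×n complex matrices A and B and any p ≥ 1, the p-Schatten quantities satisfy: if 1 ≤ p ≤ 2 then ‖A+B‖_p^p + ‖A−B‖_p^p ≤ 2(‖A‖_p^p + ‖B‖_p^p), and if p ≥ 2 then ‖A+B‖_p^p + ‖A−B‖_p^p ≤ 2^{p−1}(‖A‖_p^p + ‖B‖_p^p). -/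
open Matrix Finset
open scoped ComplexOrder

namespace ClarksonAux

open Polynomial

variable {m : Type*} [Fintype m] [DecidableEq m]
variable {m₂ : Type*} [Fintype m₂] [DecidableEq m₂]

/-- characteristic polynomial of a diagonal matrix -/
lemma charpoly_diag (v : m → ℂ) :
    (Matrix.diagonal v).charpoly = ∏ i, (X - C (v i)) := by
  have h : Matrix.charmatrix (Matrix.diagonal v)
      = Matrix.diagonal (fun i => (X : ℂ[X]) - C (v i)) := by
    ext i j
    by_cases hij : i = j
    · subst hij; simp
    · simp [Matrix.charmatrix_apply_ne _ _ _ hij, Matrix.diagonal_apply_ne _ hij]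
  rw [Matrix.charpoly, h, Matrix.det_diagonal]

/-- characteristic polynomial is invariant under conjugation -/
lemma charpoly_conj (P Q M : Matrix m m ℂ) (hPQ : P * Q = 1) (hQP : Q * P = 1) :
    (P * M * Q).charpoly = M.charpoly := by
  set Φ : Matrix m m ℂ →+* Matrix m m ℂ[X] := (C : ℂ →+* ℂ[X]).mapMatrix with hΦ
  have hc : ∀ N : Matrix m m ℂ[X], Matrix.scalar m (X : ℂ[X]) * N = N * Matrix.scalar m X :=
    fun N => (Matrix.scalar_commute (X : ℂ[X]) (fun r => Commute.all _ r) N).eq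
  have key : Φ P * Matrix.charmatrix M * Φ Q = Matrix.charmatrix (P * M * Q) := by
    unfold Matrix.charmatrix
    rw [Matrix.mul_sub, Matrix.sub_mul]
    congr 1
    · rw [← hc, Matrix.mul_assoc, ← _root_.map_mul, hPQ, _root_.map_one, Matrix.mul_one]
    · rw [← _root_.map_mul, ← _root_.map_mul]
  rw [Matrix.charpoly, Matrix.charpoly, ← key, Matrix.det_mul, Matrix.det_mul]
  have h1 : (Φ P).det * (Φ Q).det = 1 := by
    rw [← Matrix.det_mul, ← _root_.map_mul, hPQ, _root_.map_one, Matrix.det_one]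
  calc (Φ P).det * (Matrix.charmatrix M).det * (Φ Q).det
      = (Φ P).det * (Φ Q).det * (Matrix.charmatrix M).det := by ring
    _ = (Matrix.charmatrix M).det := by rw [h1, one_mul]

lemma charpoly_zero : (0 : Matrix m m ℂ).charpoly = X ^ Fintype.card m := by
  have h : (0 : Matrix m m ℂ) = Matrix.diagonal (fun _ => 0) := by simp
  rw [h, charpoly_diag]
  simp [Finset.card_univ]

/-- charpoly of AB equals charpoly of BA -/
lemma charpoly_mul_comm (A B : Matrix m m ℂ) : (A * B).charpoly = (B * A).charpoly := by
  have hPQ : (Matrix.fromBlocks 1 A 0 1 : Matrix (m ⊕ m) (m ⊕ m) ℂ)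
      * Matrix.fromBlocks 1 (-A) 0 1 = 1 := by
    simp [Matrix.fromBlocks_multiply, ← Matrix.fromBlocks_one]
  have hQP : (Matrix.fromBlocks 1 (-A) 0 1 : Matrix (m ⊕ m) (m ⊕ m) ℂ)
      * Matrix.fromBlocks 1 A 0 1 = 1 := by
    simp [Matrix.fromBlocks_multiply, ← Matrix.fromBlocks_one]
  have hconj : (Matrix.fromBlocks 1 A 0 1 : Matrix (m ⊕ m) (m ⊕ m) ℂ)
      * Matrix.fromBlocks 0 0 B (B * A) * Matrix.fromBlocks 1 (-A) 0 1
      = Matrix.fromBlocks (A * B) 0 B 0 := by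
    simp [Matrix.fromBlocks_multiply, Matrix.mul_assoc]
  have h1 := charpoly_conj _ _ (Matrix.fromBlocks 0 0 B (B * A)) hPQ hQP
  rw [hconj] at h1
  rw [Matrix.charpoly_fromBlocks_zero₁₂, Matrix.charpoly_fromBlocks_zero₁₂, charpoly_zero] at h1
  have hX : (X : ℂ[X]) ^ Fintype.card m ≠ 0 := pow_ne_zero _ Polynomial.X_ne_zero
  apply mul_left_cancel₀ hX
  rw [mul_comm ((X : ℂ[X]) ^ Fintype.card m) ((A*B).charpoly)]
  exact h1

/-- the multiset of eigenvalues of a hermitian matrix -/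
noncomputable def especH {H : Matrix m m ℂ} (hH : H.IsHermitian) : Multiset ℝ :=
  Finset.univ.val.map hH.eigenvalues

lemma sum_f_eq (f : ℝ → ℝ) {H : Matrix m m ℂ} (hH : H.IsHermitian) :
    ∑ i, f (hH.eigenvalues i) = ((especH hH).map f).sum := by
  rw [especH, Multiset.map_map]
  rfl

lemma charpoly_isHermitian {H : Matrix m m ℂ} (hH : H.IsHermitian) :
    H.charpoly = (((especH hH).map (fun r : ℝ => (r : ℂ))).map (fun z => X - C z)).prod := by
  have hV1 : (hH.eigenvectorUnitary : Matrix m m ℂ) * star (hH.eigenvectorUnitary : Matrix m m ℂ)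
      = 1 := Matrix.mem_unitaryGroup_iff.mp hH.eigenvectorUnitary.2
  have hV2 : star (hH.eigenvectorUnitary : Matrix m m ℂ) * (hH.eigenvectorUnitary : Matrix m m ℂ)
      = 1 := Matrix.mem_unitaryGroup_iff'.mp hH.eigenvectorUnitary.2
  conv_lhs => rw [hH.spectral_theorem, Unitary.conjStarAlgAut_apply]
  rw [charpoly_conj _ _ _ hV1 hV2, charpoly_diag]
  rw [especH, Multiset.map_map, Multiset.map_map]
  rfl

lemma roots_charpoly {H : Matrix m m ℂ} (hH : H.IsHermitian) :
    H.charpoly.roots = (especH hH).map (fun r : ℝ => (r : ℂ)) := by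
  rw [charpoly_isHermitian hH, Polynomial.roots_multiset_prod_X_sub_C]

lemma especH_eq {H : Matrix m m ℂ} {K : Matrix m₂ m₂ ℂ}
    (hH : H.IsHermitian) (hK : K.IsHermitian) (h : H.charpoly = K.charpoly) :
    especH hH = especH hK := by
  apply Multiset.map_injective (f := fun r : ℝ => (r : ℂ)) Complex.ofReal_injective
  rw [← roots_charpoly hH, ← roots_charpoly hK, h]

lemma fsum_eq (f : ℝ → ℝ) {H : Matrix m m ℂ} {K : Matrix m₂ m₂ ℂ}
    (hH : H.IsHermitian) (hK : K.IsHermitian) (h : H.charpoly = K.charpoly) :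
    ∑ i, f (hH.eigenvalues i) = ∑ i, f (hK.eigenvalues i) := by
  rw [sum_f_eq, sum_f_eq, especH_eq hH hK h]

lemma especH_smul (c : ℝ) {H : Matrix m m ℂ} (hH : H.IsHermitian)
    (hcH : (((c : ℂ)) • H).IsHermitian) :
    especH hcH = (especH hH).map (fun r => c * r) := by
  apply Multiset.map_injective (f := fun r : ℝ => (r : ℂ)) Complex.ofReal_injective
  rw [← roots_charpoly hcH]
  have hV1 : (hH.eigenvectorUnitary : Matrix m m ℂ) * star (hH.eigenvectorUnitary : Matrix m m ℂ)
      = 1 := Matrix.mem_unitaryGroup_iff.mp hH.eigenvectorUnitary.2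
  have hV2 : star (hH.eigenvectorUnitary : Matrix m m ℂ) * (hH.eigenvectorUnitary : Matrix m m ℂ)
      = 1 := Matrix.mem_unitaryGroup_iff'.mp hH.eigenvectorUnitary.2
  have hd : (c : ℂ) • H = (hH.eigenvectorUnitary : Matrix m m ℂ)
      * Matrix.diagonal (fun i => ((c * hH.eigenvalues i : ℝ) : ℂ))
      * star (hH.eigenvectorUnitary : Matrix m m ℂ) := by
    conv_lhs => rw [hH.spectral_theorem, Unitary.conjStarAlgAut_apply]
    rw [← Matrix.smul_mul, ← Matrix.mul_smul]
    congr 2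
    ext i j
    by_cases hij : i = j
    · subst hij
      simp [Function.comp, smul_eq_mul]
    · simp [Matrix.diagonal_apply_ne _ hij]
  have hcp : ((c : ℂ) • H).charpoly
      = ((((especH hH).map (fun r => c * r)).map (fun r : ℝ => (r : ℂ))).map
          (fun z => X - C z)).prod := by
    rw [hd, charpoly_conj _ _ _ hV1 hV2, charpoly_diag]
    rw [especH, Multiset.map_map, Multiset.map_map, Multiset.map_map]
    rfl
  rw [hcp, Polynomial.roots_multiset_prod_X_sub_C]

/-- eigenvalues of the zero matrix -/
lemma eigenvalues_zero (h0 : (0 : Matrix m m ℂ).IsHermitian) (i : m) :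
    h0.eigenvalues i = 0 := by
  rw [Matrix.IsHermitian.eigenvalues_eq]
  simp

/-- double stochasticity of |Z i j|^2 for the diagonal of a unitary conjugation -/
lemma diag_decomp {H : Matrix m m ℂ} (hH : H.IsHermitian) {W : Matrix m m ℂ}
    (hW : W ∈ Matrix.unitaryGroup m ℂ) :
    ∃ d : m → m → ℝ, (∀ i j, 0 ≤ d i j) ∧ (∀ i, ∑ j, d i j = 1) ∧ (∀ j, ∑ i, d i j = 1) ∧
      ∀ i, ((star W * H * W) i i).re = ∑ j, d i j * hH.eigenvalues j := by
  classical
  have hV1 : (hH.eigenvectorUnitary : Matrix m m ℂ) * star (hH.eigenvectorUnitary : Matrix m m ℂ)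
      = 1 := Matrix.mem_unitaryGroup_iff.mp hH.eigenvectorUnitary.2
  have hW1 : W * star W = 1 := Matrix.mem_unitaryGroup_iff.mp hW
  have hW2 : star W * W = 1 := Matrix.mem_unitaryGroup_iff'.mp hW
  set V : Matrix m m ℂ := (hH.eigenvectorUnitary : Matrix m m ℂ) with hVdef
  have hV2 : star V * V = 1 := Matrix.mem_unitaryGroup_iff'.mp hH.eigenvectorUnitary.2
  set Z : Matrix m m ℂ := star W * V with hZdef
  have hZ1 : Z * star Z = 1 := by
    rw [hZdef, Matrix.star_mul, star_star, Matrix.mul_assoc, ← Matrix.mul_assoc V, hV1,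
      Matrix.one_mul, hW2]
  have hZ2 : star Z * Z = 1 := by
    rw [hZdef, Matrix.star_mul, star_star, Matrix.mul_assoc, ← Matrix.mul_assoc W, hW1,
      Matrix.one_mul, hV2]
  have hkey : star W * H * W = Z * Matrix.diagonal (RCLike.ofReal ∘ hH.eigenvalues) * star Z := by
    conv_lhs => rw [hH.spectral_theorem, Unitary.conjStarAlgAut_apply]
    rw [hZdef, Matrix.star_mul, star_star]
    simp only [← hVdef, Matrix.mul_assoc]
  refine ⟨fun i j => Complex.normSq (Z i j), fun i j => Complex.normSq_nonneg _, ?_, ?_, ?_⟩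
  · intro i
    have h := congrArg (fun M : Matrix m m ℂ => M i i) hZ1
    simp only [Matrix.mul_apply, Matrix.star_apply, Matrix.one_apply_eq] at h
    have h2 : (((∑ j, Complex.normSq (Z i j) : ℝ)) : ℂ) = 1 := by
      push_cast
      rw [← h]
      exact Finset.sum_congr rfl fun j _ => (Complex.mul_conj (Z i j)).symm
    exact_mod_cast h2
  · intro j
    have h := congrArg (fun M : Matrix m m ℂ => M j j) hZ2
    simp only [Matrix.mul_apply, Matrix.star_apply, Matrix.one_apply_eq] at h
    have h2 : (((∑ i, Complex.normSq (Z i j) : ℝ)) : ℂ) = 1 := by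
      push_cast
      rw [← h]
      exact Finset.sum_congr rfl fun i _ => by
        rw [mul_comm]
        exact (Complex.mul_conj (Z i j)).symm
    exact_mod_cast h2
  · intro i
    rw [hkey]
    have hentry : (Z * Matrix.diagonal ((RCLike.ofReal ∘ hH.eigenvalues : m → ℂ)) * star Z) i i
        = ((∑ j, Complex.normSq (Z i j) * hH.eigenvalues j : ℝ) : ℂ) := by
      rw [Matrix.mul_apply]
      push_cast
      refine Finset.sum_congr rfl fun j _ => ?_
      rw [Matrix.mul_diagonal, Matrix.star_apply]
      have : (RCLike.ofReal ∘ hH.eigenvalues) j = ((hH.eigenvalues j : ℝ) : ℂ) := rfl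
      rw [this]
      rw [← Complex.mul_conj (Z i j), Complex.star_def]
      ring
    rw [hentry, Complex.ofReal_re]

lemma peierls_convex {H : Matrix m m ℂ} (hH : H.IsHermitian) {W : Matrix m m ℂ}
    (hW : W ∈ Matrix.unitaryGroup m ℂ) {f : ℝ → ℝ} (hf : ConvexOn ℝ (Set.Ici 0) f)
    (hm : ∀ i, 0 ≤ hH.eigenvalues i) :
    ∑ i, f (((star W * H * W) i i).re) ≤ ∑ i, f (hH.eigenvalues i) := by
  obtain ⟨d, hd0, hrow, hcol, hdiag⟩ := diag_decomp hH hW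
  calc ∑ i, f (((star W * H * W) i i).re)
      = ∑ i, f (∑ j, d i j * hH.eigenvalues j) := by
        exact Finset.sum_congr rfl fun i _ => by rw [hdiag i]
    _ ≤ ∑ i, ∑ j, d i j * f (hH.eigenvalues j) := by
        refine Finset.sum_le_sum fun i _ => ?_
        have := hf.map_sum_le (t := Finset.univ) (w := d i) (p := hH.eigenvalues)
          (fun j _ => hd0 i j) (hrow i) (fun j _ => Set.mem_Ici.mpr (hm j))
        simpa [smul_eq_mul] using this
    _ = ∑ j, f (hH.eigenvalues j) := by
        rw [Finset.sum_comm]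
        refine Finset.sum_congr rfl fun j _ => ?_
        rw [← Finset.sum_mul, hcol j, one_mul]

lemma peierls_concave {H : Matrix m m ℂ} (hH : H.IsHermitian) {W : Matrix m m ℂ}
    (hW : W ∈ Matrix.unitaryGroup m ℂ) {f : ℝ → ℝ} (hf : ConcaveOn ℝ (Set.Ici 0) f)
    (hm : ∀ i, 0 ≤ hH.eigenvalues i) :
    ∑ i, f (hH.eigenvalues i) ≤ ∑ i, f (((star W * H * W) i i).re) := by
  obtain ⟨d, hd0, hrow, hcol, hdiag⟩ := diag_decomp hH hW
  calc ∑ j, f (hH.eigenvalues j)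
      = ∑ i, ∑ j, d i j * f (hH.eigenvalues j) := by
        rw [Finset.sum_comm]
        refine Finset.sum_congr rfl fun j _ => ?_
        rw [← Finset.sum_mul, hcol j, one_mul]
    _ ≤ ∑ i, f (∑ j, d i j * hH.eigenvalues j) := by
        refine Finset.sum_le_sum fun i _ => ?_
        have := hf.le_map_sum (t := Finset.univ) (w := d i) (p := hH.eigenvalues)
          (fun j _ => hd0 i j) (hrow i) (fun j _ => Set.mem_Ici.mpr (hm j))
        simpa [smul_eq_mul] using this
    _ = ∑ i, f (((star W * H * W) i i).re) := by
        exact Finset.sum_congr rfl fun i _ => by rw [hdiag i]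

lemma diag_re_nonneg {H : Matrix m m ℂ} (hH : H.IsHermitian) {W : Matrix m m ℂ}
    (hW : W ∈ Matrix.unitaryGroup m ℂ) (hm : ∀ i, 0 ≤ hH.eigenvalues i) (i : m) :
    0 ≤ ((star W * H * W) i i).re := by
  obtain ⟨d, hd0, hrow, hcol, hdiag⟩ := diag_decomp hH hW
  rw [hdiag i]
  exact Finset.sum_nonneg fun j _ => mul_nonneg (hd0 i j) (hm j)

lemma key_convex {G H K : Matrix m m ℂ} (hG : G.IsHermitian) (hH : H.IsHermitian)
    (hK : K.IsHermitian) (h2 : (2 : ℂ) • G = H + K) {f : ℝ → ℝ}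
    (hf : ConvexOn ℝ (Set.Ici 0) f)
    (hHm : ∀ i, 0 ≤ hH.eigenvalues i) (hKm : ∀ i, 0 ≤ hK.eigenvalues i) :
    ∑ i, f (hG.eigenvalues i)
      ≤ (∑ i, f (hH.eigenvalues i) + ∑ i, f (hK.eigenvalues i)) / 2 := by
  classical
  set W : Matrix m m ℂ := (hG.eigenvectorUnitary : Matrix m m ℂ) with hWdef
  have hWu : W ∈ Matrix.unitaryGroup m ℂ := hG.eigenvectorUnitary.2
  have hdiag : star W * G * W = Matrix.diagonal (RCLike.ofReal ∘ hG.eigenvalues) :=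
    by have := hG.conjStarAlgAut_star_eigenvectorUnitary
       rwa [Unitary.conjStarAlgAut_star_apply] at this
  have hev : ∀ i, hG.eigenvalues i
      = (((star W * H * W) i i).re + ((star W * K * W) i i).re) / 2 := by
    intro i
    have h1 : star W * ((2 : ℂ) • G) * W = (2 : ℂ) • (star W * G * W) := by
      rw [← Matrix.smul_mul, ← Matrix.mul_smul]
    have h2 : star W * ((2 : ℂ) • G) * W = star W * H * W + star W * K * W := by
      rw [h2, Matrix.mul_add, Matrix.add_mul]
    have h3 : ((star W * H * W) i i).re + ((star W * K * W) i i).re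
        = 2 * hG.eigenvalues i := by
      have := congrArg (fun M : Matrix m m ℂ => (M i i).re) (h2.symm.trans h1)
      simp only [Matrix.add_apply, Complex.add_re, hdiag, Matrix.smul_apply,
        Matrix.diagonal_apply_eq, smul_eq_mul] at this
      rw [this]
      simp [Function.comp]
    linarith
  have hHa : ∀ i, 0 ≤ ((star W * H * W) i i).re := diag_re_nonneg hH hWu hHm
  have hKa : ∀ i, 0 ≤ ((star W * K * W) i i).re := diag_re_nonneg hK hWu hKm
  have pH := peierls_convex hH hWu hf hHm
  have pK := peierls_convex hK hWu hf hKm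
  have main : ∑ i, f (hG.eigenvalues i)
      ≤ ∑ i, ((1/2) * f (((star W * H * W) i i).re)
        + (1/2) * f (((star W * K * W) i i).re)) := by
    refine Finset.sum_le_sum fun i _ => ?_
    rw [hev i]
    have hco := hf.2 (Set.mem_Ici.mpr (hHa i)) (Set.mem_Ici.mpr (hKa i))
      (by norm_num : (0:ℝ) ≤ 1/2) (by norm_num : (0:ℝ) ≤ 1/2) (by norm_num : (1/2:ℝ) + 1/2 = 1)
    have harg : (1/2 : ℝ) • ((star W * H * W) i i).re + (1/2 : ℝ) • ((star W * K * W) i i).re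
        = (((star W * H * W) i i).re + ((star W * K * W) i i).re) / 2 := by
      simp [smul_eq_mul]; ring
    rw [harg] at hco
    simpa [smul_eq_mul] using hco
  rw [Finset.sum_add_distrib] at main
  simp only [← Finset.mul_sum] at main
  linarith

lemma key_concave {G H K : Matrix m m ℂ} (hG : G.IsHermitian) (hH : H.IsHermitian)
    (hK : K.IsHermitian) (h2 : (2 : ℂ) • G = H + K) {f : ℝ → ℝ}
    (hf : ConcaveOn ℝ (Set.Ici 0) f)
    (hHm : ∀ i, 0 ≤ hH.eigenvalues i) (hKm : ∀ i, 0 ≤ hK.eigenvalues i) :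
    (∑ i, f (hH.eigenvalues i) + ∑ i, f (hK.eigenvalues i)) / 2
      ≤ ∑ i, f (hG.eigenvalues i) := by
  classical
  set W : Matrix m m ℂ := (hG.eigenvectorUnitary : Matrix m m ℂ) with hWdef
  have hWu : W ∈ Matrix.unitaryGroup m ℂ := hG.eigenvectorUnitary.2
  have hdiag : star W * G * W = Matrix.diagonal (RCLike.ofReal ∘ hG.eigenvalues) :=
    by have := hG.conjStarAlgAut_star_eigenvectorUnitary
       rwa [Unitary.conjStarAlgAut_star_apply] at this
  have hev : ∀ i, hG.eigenvalues i
      = (((star W * H * W) i i).re + ((star W * K * W) i i).re) / 2 := by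
    intro i
    have h1 : star W * ((2 : ℂ) • G) * W = (2 : ℂ) • (star W * G * W) := by
      rw [← Matrix.smul_mul, ← Matrix.mul_smul]
    have h2' : star W * ((2 : ℂ) • G) * W = star W * H * W + star W * K * W := by
      rw [h2, Matrix.mul_add, Matrix.add_mul]
    have h3 : ((star W * H * W) i i).re + ((star W * K * W) i i).re
        = 2 * hG.eigenvalues i := by
      have := congrArg (fun M : Matrix m m ℂ => (M i i).re) (h2'.symm.trans h1)
      simp only [Matrix.add_apply, Complex.add_re, hdiag, Matrix.smul_apply,
        Matrix.diagonal_apply_eq, smul_eq_mul] at this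
      rw [this]
      simp [Function.comp]
    linarith
  have hHa : ∀ i, 0 ≤ ((star W * H * W) i i).re := diag_re_nonneg hH hWu hHm
  have hKa : ∀ i, 0 ≤ ((star W * K * W) i i).re := diag_re_nonneg hK hWu hKm
  have pH := peierls_concave hH hWu hf hHm
  have pK := peierls_concave hK hWu hf hKm
  have main : ∑ i, ((1/2) * f (((star W * H * W) i i).re)
        + (1/2) * f (((star W * K * W) i i).re)) ≤ ∑ i, f (hG.eigenvalues i) := by
    refine Finset.sum_le_sum fun i _ => ?_
    rw [hev i]
    have hco := hf.2 (Set.mem_Ici.mpr (hHa i)) (Set.mem_Ici.mpr (hKa i))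
      (by norm_num : (0:ℝ) ≤ 1/2) (by norm_num : (0:ℝ) ≤ 1/2) (by norm_num : (1/2:ℝ) + 1/2 = 1)
    have harg : (1/2 : ℝ) • ((star W * H * W) i i).re + (1/2 : ℝ) • ((star W * K * W) i i).re
        = (((star W * H * W) i i).re + ((star W * K * W) i i).re) / 2 := by
      simp [smul_eq_mul]; ring
    rw [harg] at hco
    simpa [smul_eq_mul] using hco
  rw [Finset.sum_add_distrib] at main
  simp only [← Finset.mul_sum] at main
  linarith

lemma fsum_fromBlocks_diag (f : ℝ → ℝ) {P : Matrix m m ℂ} {Q : Matrix m₂ m₂ ℂ}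
    (hP : P.IsHermitian) (hQ : Q.IsHermitian)
    (hPQ : (Matrix.fromBlocks P 0 0 Q).IsHermitian) :
    ∑ i, f (hPQ.eigenvalues i) = ∑ i, f (hP.eigenvalues i) + ∑ i, f (hQ.eigenvalues i) := by
  rw [sum_f_eq, sum_f_eq, sum_f_eq]
  have h : especH hPQ = especH hP + especH hQ := by
    apply Multiset.map_injective (f := fun r : ℝ => (r : ℂ)) Complex.ofReal_injective
    rw [← roots_charpoly, Multiset.map_add, ← roots_charpoly hP, ← roots_charpoly hQ,
      Matrix.charpoly_fromBlocks_zero₁₂,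
      Polynomial.roots_mul (mul_ne_zero (Matrix.charpoly_monic P).ne_zero
        (Matrix.charpoly_monic Q).ne_zero)]
  rw [h, Multiset.map_add, Multiset.sum_add]

/-- superadditivity of the convex trace function, via pinching -/
lemma superadd (M N : Matrix m m ℂ) {f : ℝ → ℝ} (hf0 : f 0 = 0)
    (hf : ConvexOn ℝ (Set.Ici 0) f)
    (hS : (Mᴴ * M + Nᴴ * N).IsHermitian) :
    ∑ i, f ((Matrix.posSemidef_conjTranspose_mul_self M).isHermitian.eigenvalues i)
      + ∑ i, f ((Matrix.posSemidef_conjTranspose_mul_self N).isHermitian.eigenvalues i)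
      ≤ ∑ i, f (hS.eigenvalues i) := by
  classical
  set T : Matrix (m ⊕ m) (m ⊕ m) ℂ := Matrix.fromBlocks M 0 N 0 with hT
  set U : Matrix (m ⊕ m) (m ⊕ m) ℂ := Matrix.fromBlocks 1 0 0 (-1) with hU
  have hTps : (T * Tᴴ).PosSemidef := Matrix.posSemidef_self_mul_conjTranspose _
  have hH := hTps.isHermitian
  have hblocks : T * Tᴴ = Matrix.fromBlocks (M * Mᴴ) (M * Nᴴ) (N * Mᴴ) (N * Nᴴ) := by
    rw [hT]
    simp [Matrix.fromBlocks_conjTranspose, Matrix.fromBlocks_multiply]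
  have hUstar : star U = U := by
    rw [hU]
    simp [Matrix.star_eq_conjTranspose, Matrix.fromBlocks_conjTranspose]
  have hUh : Uᴴ = U := by rw [← Matrix.star_eq_conjTranspose]; exact hUstar
  have hUU : U * U = 1 := by
    rw [hU]
    simp [Matrix.fromBlocks_multiply, ← Matrix.fromBlocks_one]
  set K : Matrix (m ⊕ m) (m ⊕ m) ℂ := U * (T * Tᴴ) * U with hK
  have hKps : K.PosSemidef := by
    have h := hTps.mul_mul_conjTranspose_same U
    rwa [hUh, ← hK] at h
  have hGh : (Matrix.fromBlocks (M * Mᴴ) 0 0 (N * Nᴴ)).IsHermitian :=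
    Matrix.IsHermitian.fromBlocks
      (Matrix.posSemidef_self_mul_conjTranspose M).isHermitian (by simp)
      (Matrix.posSemidef_self_mul_conjTranspose N).isHermitian
  have hKblocks : K = Matrix.fromBlocks (M * Mᴴ) (-(M * Nᴴ)) (-(N * Mᴴ)) (N * Nᴴ) := by
    rw [hK, hblocks, hU]
    simp [Matrix.fromBlocks_multiply]
  have h2 : (2 : ℂ) • (Matrix.fromBlocks (M * Mᴴ) 0 0 (N * Nᴴ)) = (T * Tᴴ) + K := by
    rw [hblocks, hKblocks]
    simp [Matrix.fromBlocks_add, Matrix.fromBlocks_smul, two_smul]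
  have hKfs : ∑ i, f (hKps.isHermitian.eigenvalues i) = ∑ i, f (hH.eigenvalues i) :=
    fsum_eq f hKps.isHermitian hH (by rw [hK]; exact charpoly_conj U U _ hUU hUU)
  have hGfs : ∑ i, f (hGh.eigenvalues i)
      = ∑ i, f ((Matrix.posSemidef_self_mul_conjTranspose M).isHermitian.eigenvalues i)
        + ∑ i, f ((Matrix.posSemidef_self_mul_conjTranspose N).isHermitian.eigenvalues i) :=
    fsum_fromBlocks_diag f _ _ hGh
  have hTTfs : ∑ i, f (hH.eigenvalues i) = ∑ i, f (hS.eigenvalues i) := by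
    have e1 : ∑ i, f (hH.eigenvalues i)
        = ∑ i, f ((Matrix.posSemidef_conjTranspose_mul_self T).isHermitian.eigenvalues i) :=
      fsum_eq f hH _ (charpoly_mul_comm T Tᴴ)
    have hTT : Tᴴ * T = Matrix.fromBlocks (Mᴴ * M + Nᴴ * N) 0 0 0 := by
      rw [hT]
      simp [Matrix.fromBlocks_conjTranspose, Matrix.fromBlocks_multiply]
    have hFB : (Matrix.fromBlocks (Mᴴ * M + Nᴴ * N) 0 0 (0 : Matrix m m ℂ)).IsHermitian :=
      Matrix.IsHermitian.fromBlocks hS (by simp) Matrix.isHermitian_zero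
    have e2 : ∑ i, f ((Matrix.posSemidef_conjTranspose_mul_self T).isHermitian.eigenvalues i)
        = ∑ i, f (hFB.eigenvalues i) :=
      fsum_eq f _ hFB (by rw [hTT])
    have e3 := fsum_fromBlocks_diag f hS
      (Matrix.isHermitian_zero : (0 : Matrix m m ℂ).IsHermitian) hFB
    have e4 : ∑ i : m, f ((Matrix.isHermitian_zero :
        (0 : Matrix m m ℂ).IsHermitian).eigenvalues i) = 0 := by
      simp [eigenvalues_zero, hf0]
    rw [e1, e2, e3, e4, add_zero]
  have hMfs : ∑ i, f ((Matrix.posSemidef_self_mul_conjTranspose M).isHermitian.eigenvalues i)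
      = ∑ i, f ((Matrix.posSemidef_conjTranspose_mul_self M).isHermitian.eigenvalues i) :=
    fsum_eq f _ _ (charpoly_mul_comm M Mᴴ)
  have hNfs : ∑ i, f ((Matrix.posSemidef_self_mul_conjTranspose N).isHermitian.eigenvalues i)
      = ∑ i, f ((Matrix.posSemidef_conjTranspose_mul_self N).isHermitian.eigenvalues i) :=
    fsum_eq f _ _ (charpoly_mul_comm N Nᴴ)
  have step1 : ∑ i, f (hGh.eigenvalues i)
      ≤ (∑ i, f (hH.eigenvalues i) + ∑ i, f (hKps.isHermitian.eigenvalues i)) / 2 :=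
    key_convex hGh hH hKps.isHermitian h2 hf hTps.eigenvalues_nonneg hKps.eigenvalues_nonneg
  linarith

/-- subadditivity of the concave trace function, via pinching -/
lemma subadd (M N : Matrix m m ℂ) {f : ℝ → ℝ} (hf0 : f 0 = 0)
    (hf : ConcaveOn ℝ (Set.Ici 0) f)
    (hS : (Mᴴ * M + Nᴴ * N).IsHermitian) :
    ∑ i, f (hS.eigenvalues i)
      ≤ ∑ i, f ((Matrix.posSemidef_conjTranspose_mul_self M).isHermitian.eigenvalues i)
        + ∑ i, f ((Matrix.posSemidef_conjTranspose_mul_self N).isHermitian.eigenvalues i) := by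
  classical
  set T : Matrix (m ⊕ m) (m ⊕ m) ℂ := Matrix.fromBlocks M 0 N 0 with hT
  set U : Matrix (m ⊕ m) (m ⊕ m) ℂ := Matrix.fromBlocks 1 0 0 (-1) with hU
  have hTps : (T * Tᴴ).PosSemidef := Matrix.posSemidef_self_mul_conjTranspose _
  have hH := hTps.isHermitian
  have hblocks : T * Tᴴ = Matrix.fromBlocks (M * Mᴴ) (M * Nᴴ) (N * Mᴴ) (N * Nᴴ) := by
    rw [hT]
    simp [Matrix.fromBlocks_conjTranspose, Matrix.fromBlocks_multiply]
  have hUstar : star U = U := by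
    rw [hU]
    simp [Matrix.star_eq_conjTranspose, Matrix.fromBlocks_conjTranspose]
  have hUh : Uᴴ = U := by rw [← Matrix.star_eq_conjTranspose]; exact hUstar
  have hUU : U * U = 1 := by
    rw [hU]
    simp [Matrix.fromBlocks_multiply, ← Matrix.fromBlocks_one]
  set K : Matrix (m ⊕ m) (m ⊕ m) ℂ := U * (T * Tᴴ) * U with hK
  have hKps : K.PosSemidef := by
    have h := hTps.mul_mul_conjTranspose_same U
    rwa [hUh, ← hK] at h
  have hGh : (Matrix.fromBlocks (M * Mᴴ) 0 0 (N * Nᴴ)).IsHermitian :=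
    Matrix.IsHermitian.fromBlocks
      (Matrix.posSemidef_self_mul_conjTranspose M).isHermitian (by simp)
      (Matrix.posSemidef_self_mul_conjTranspose N).isHermitian
  have hKblocks : K = Matrix.fromBlocks (M * Mᴴ) (-(M * Nᴴ)) (-(N * Mᴴ)) (N * Nᴴ) := by
    rw [hK, hblocks, hU]
    simp [Matrix.fromBlocks_multiply]
  have h2 : (2 : ℂ) • (Matrix.fromBlocks (M * Mᴴ) 0 0 (N * Nᴴ)) = (T * Tᴴ) + K := by
    rw [hblocks, hKblocks]
    simp [Matrix.fromBlocks_add, Matrix.fromBlocks_smul, two_smul]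
  have hKfs : ∑ i, f (hKps.isHermitian.eigenvalues i) = ∑ i, f (hH.eigenvalues i) :=
    fsum_eq f hKps.isHermitian hH (by rw [hK]; exact charpoly_conj U U _ hUU hUU)
  have hGfs : ∑ i, f (hGh.eigenvalues i)
      = ∑ i, f ((Matrix.posSemidef_self_mul_conjTranspose M).isHermitian.eigenvalues i)
        + ∑ i, f ((Matrix.posSemidef_self_mul_conjTranspose N).isHermitian.eigenvalues i) :=
    fsum_fromBlocks_diag f _ _ hGh
  have hTTfs : ∑ i, f (hH.eigenvalues i) = ∑ i, f (hS.eigenvalues i) := by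
    have e1 : ∑ i, f (hH.eigenvalues i)
        = ∑ i, f ((Matrix.posSemidef_conjTranspose_mul_self T).isHermitian.eigenvalues i) :=
      fsum_eq f hH _ (charpoly_mul_comm T Tᴴ)
    have hTT : Tᴴ * T = Matrix.fromBlocks (Mᴴ * M + Nᴴ * N) 0 0 0 := by
      rw [hT]
      simp [Matrix.fromBlocks_conjTranspose, Matrix.fromBlocks_multiply]
    have hFB : (Matrix.fromBlocks (Mᴴ * M + Nᴴ * N) 0 0 (0 : Matrix m m ℂ)).IsHermitian :=
      Matrix.IsHermitian.fromBlocks hS (by simp) Matrix.isHermitian_zero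
    have e2 : ∑ i, f ((Matrix.posSemidef_conjTranspose_mul_self T).isHermitian.eigenvalues i)
        = ∑ i, f (hFB.eigenvalues i) :=
      fsum_eq f _ hFB (by rw [hTT])
    have e3 := fsum_fromBlocks_diag f hS
      (Matrix.isHermitian_zero : (0 : Matrix m m ℂ).IsHermitian) hFB
    have e4 : ∑ i : m, f ((Matrix.isHermitian_zero :
        (0 : Matrix m m ℂ).IsHermitian).eigenvalues i) = 0 := by
      simp [eigenvalues_zero, hf0]
    rw [e1, e2, e3, e4, add_zero]
  have hMfs : ∑ i, f ((Matrix.posSemidef_self_mul_conjTranspose M).isHermitian.eigenvalues i)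
      = ∑ i, f ((Matrix.posSemidef_conjTranspose_mul_self M).isHermitian.eigenvalues i) :=
    fsum_eq f _ _ (charpoly_mul_comm M Mᴴ)
  have hNfs : ∑ i, f ((Matrix.posSemidef_self_mul_conjTranspose N).isHermitian.eigenvalues i)
      = ∑ i, f ((Matrix.posSemidef_conjTranspose_mul_self N).isHermitian.eigenvalues i) :=
    fsum_eq f _ _ (charpoly_mul_comm N Nᴴ)
  have step1 : (∑ i, f (hH.eigenvalues i) + ∑ i, f (hKps.isHermitian.eigenvalues i)) / 2
      ≤ ∑ i, f (hGh.eigenvalues i) :=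
    key_concave hGh hH hKps.isHermitian h2 hf hTps.eigenvalues_nonneg hKps.eigenvalues_nonneg
  linarith

end ClarksonAux

theorem clarkson_type_inequalities {n : ℕ}
    (A B : Matrix (Fin n) (Fin n) ℂ) (p : ℝ) :
    (1 ≤ p → p ≤ 2 →
      schattenPow p (A + B) + schattenPow p (A - B) ≤
        2 * (schattenPow p A + schattenPow p B)) ∧
    (2 ≤ p →
      schattenPow p (A + B) + schattenPow p (A - B) ≤
        (2 : ℝ) ^ (p - 1) * (schattenPow p A + schattenPow p B)) := by
  open ClarksonAux in
  have bridge : ∀ X : Matrix (Fin n) (Fin n) ℂ,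
      schattenPow p X
        = ∑ i, ((Matrix.posSemidef_conjTranspose_mul_self X).isHermitian.eigenvalues i)
            ^ (p / 2) := by
    intro X
    refine Finset.sum_congr rfl fun i _ => ?_
    have h0 := (Matrix.posSemidef_conjTranspose_mul_self X).eigenvalues_nonneg i
    show Real.sqrt _ ^ p = _
    rw [Real.sqrt_eq_rpow, ← Real.rpow_mul h0, show (1 / 2) * p = p / 2 by ring]
  have hMN : (A + B)ᴴ * (A + B) + (A - B)ᴴ * (A - B)
      = (2 : ℂ) • (Aᴴ * A + Bᴴ * B) := by
    rw [Matrix.conjTranspose_add, Matrix.conjTranspose_sub]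
    simp only [Matrix.add_mul, Matrix.mul_add, Matrix.sub_mul, Matrix.mul_sub, two_smul,
      smul_add]
    abel
  have hSherm : ((A + B)ᴴ * (A + B) + (A - B)ᴴ * (A - B)).IsHermitian :=
    ((Matrix.posSemidef_conjTranspose_mul_self (A + B)).add
      (Matrix.posSemidef_conjTranspose_mul_self (A - B))).isHermitian
  have hABherm : (Aᴴ * A + Bᴴ * B).IsHermitian :=
    ((Matrix.posSemidef_conjTranspose_mul_self A).add
      (Matrix.posSemidef_conjTranspose_mul_self B)).isHermitian
  constructor
  · intro hp1 hp2
    have hq0 : (0 : ℝ) < p / 2 := by linarith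
    have hf : ConcaveOn ℝ (Set.Ici 0) (fun x : ℝ => x ^ (p / 2)) :=
      Real.concaveOn_rpow (by linarith) (by linarith)
    have hf0 : (fun x : ℝ => x ^ (p / 2)) 0 = 0 := Real.zero_rpow hq0.ne'
    have k1 := key_concave hABherm
      (Matrix.posSemidef_conjTranspose_mul_self (A + B)).isHermitian
      (Matrix.posSemidef_conjTranspose_mul_self (A - B)).isHermitian
      hMN.symm hf
      (Matrix.posSemidef_conjTranspose_mul_self (A + B)).eigenvalues_nonneg
      (Matrix.posSemidef_conjTranspose_mul_self (A - B)).eigenvalues_nonneg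
    have k2 := subadd A B hf0 hf hABherm
    rw [bridge (A + B), bridge (A - B), bridge A, bridge B]
    linarith
  · intro hp2
    have hq0 : (0 : ℝ) < p / 2 := by linarith
    have hf : ConvexOn ℝ (Set.Ici 0) (fun x : ℝ => x ^ (p / 2)) :=
      convexOn_rpow (by linarith)
    have hf0 : (fun x : ℝ => x ^ (p / 2)) 0 = 0 := Real.zero_rpow hq0.ne'
    have hsup := superadd (A + B) (A - B) hf0 hf hSherm
    have h4 : ∀ X : Matrix (Fin n) (Fin n) ℂ, ((4 : ℂ) • (Xᴴ * X)).PosSemidef := by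
      intro X
      have h4e : ((4 : ℂ) • (Xᴴ * X)) = ((2 : ℂ) • X)ᴴ * ((2 : ℂ) • X) := by
        rw [Matrix.conjTranspose_smul, Matrix.smul_mul, Matrix.mul_smul, smul_smul]
        norm_num
      rw [h4e]
      exact Matrix.posSemidef_conjTranspose_mul_self _
    have h2S : (2 : ℂ) • ((A + B)ᴴ * (A + B) + (A - B)ᴴ * (A - B))
        = (4 : ℂ) • (Aᴴ * A) + (4 : ℂ) • (Bᴴ * B) := by
      rw [hMN, smul_smul, smul_add]
      norm_num
    have k := key_convex hSherm (h4 A).isHermitian (h4 B).isHermitian h2S hf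
      (h4 A).eigenvalues_nonneg (h4 B).eigenvalues_nonneg
    have hscale : ∀ X : Matrix (Fin n) (Fin n) ℂ,
        ∑ i, (fun x : ℝ => x ^ (p / 2)) ((h4 X).isHermitian.eigenvalues i)
          = (2 : ℝ) ^ p * ∑ i,
              ((Matrix.posSemidef_conjTranspose_mul_self X).isHermitian.eigenvalues i)
                ^ (p / 2) := by
      intro X
      have hcast : (((4 : ℝ)) : ℂ) = (4 : ℂ) := by norm_num
      have h4' : ((((4 : ℝ)) : ℂ) • (Xᴴ * X)).IsHermitian := by
        rw [hcast]; exact (h4 X).isHermitian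
      have e0 : ∑ i, (fun x : ℝ => x ^ (p / 2)) ((h4 X).isHermitian.eigenvalues i)
          = ∑ i, (fun x : ℝ => x ^ (p / 2)) (h4'.eigenvalues i) :=
        fsum_eq (fun x : ℝ => x ^ (p / 2)) (h4 X).isHermitian h4' (by rw [hcast])
      have h42 : (4 : ℝ) ^ (p / 2) = (2 : ℝ) ^ p := by
        rw [show (4 : ℝ) = (2 : ℝ) ^ (2 : ℕ) by norm_num,
          ← Real.rpow_natCast (2 : ℝ) 2, ← Real.rpow_mul (by norm_num : (0 : ℝ) ≤ 2),
          show ((2 : ℕ) : ℝ) * (p / 2) = p by push_cast; ring]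
      have hcongr : (especH (Matrix.posSemidef_conjTranspose_mul_self X).isHermitian).map
            ((fun x : ℝ => x ^ (p / 2)) ∘ (fun r => 4 * r))
          = (especH (Matrix.posSemidef_conjTranspose_mul_self X).isHermitian).map
            (fun r => (2 : ℝ) ^ p * r ^ (p / 2)) := by
        apply Multiset.map_congr rfl
        intro r hr
        have hr0 : 0 ≤ r := by
          obtain ⟨i, _, rfl⟩ := Multiset.mem_map.mp hr
          exact (Matrix.posSemidef_conjTranspose_mul_self X).eigenvalues_nonneg i
        show (4 * r) ^ (p / 2) = (2 : ℝ) ^ p * r ^ (p / 2)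
        rw [Real.mul_rpow (by norm_num) hr0, h42]
      calc ∑ i, (fun x : ℝ => x ^ (p / 2)) ((h4 X).isHermitian.eigenvalues i)
          = ∑ i, (fun x : ℝ => x ^ (p / 2)) (h4'.eigenvalues i) := e0
        _ = ((especH h4').map (fun x : ℝ => x ^ (p / 2))).sum :=
            sum_f_eq (fun x : ℝ => x ^ (p / 2)) h4'
        _ = (((especH (Matrix.posSemidef_conjTranspose_mul_self X).isHermitian).map
              (fun r => 4 * r)).map (fun x : ℝ => x ^ (p / 2))).sum := by
            rw [especH_smul (4 : ℝ)
              (Matrix.posSemidef_conjTranspose_mul_self X).isHermitian h4']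
        _ = ((especH (Matrix.posSemidef_conjTranspose_mul_self X).isHermitian).map
              ((fun x : ℝ => x ^ (p / 2)) ∘ (fun r => 4 * r))).sum := by
            rw [Multiset.map_map]
        _ = ((especH (Matrix.posSemidef_conjTranspose_mul_self X).isHermitian).map
              (fun r => (2 : ℝ) ^ p * r ^ (p / 2))).sum := by rw [hcongr]
        _ = (2 : ℝ) ^ p * ((especH
              (Matrix.posSemidef_conjTranspose_mul_self X).isHermitian).map
              (fun r => r ^ (p / 2))).sum := by rw [Multiset.sum_map_mul_left]
        _ = (2 : ℝ) ^ p * ∑ i,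
              ((Matrix.posSemidef_conjTranspose_mul_self X).isHermitian.eigenvalues i)
                ^ (p / 2) := by
            rw [← sum_f_eq (fun r : ℝ => r ^ (p / 2))
              (Matrix.posSemidef_conjTranspose_mul_self X).isHermitian]
    rw [hscale A, hscale B] at k
    have hpow : (2 : ℝ) ^ (p - 1) = (2 : ℝ) ^ p / 2 := by
      rw [Real.rpow_sub (by norm_num : (0 : ℝ) < 2), Real.rpow_one]
    rw [bridge (A + B), bridge (A - B), bridge A, bridge B, hpow]
    have harith : ∀ a b : ℝ, ((2:ℝ) ^ p * a + (2:ℝ) ^ p * b) / 2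
        = (2:ℝ) ^ p / 2 * (a + b) := by intro a b; ring
    rw [harith
      (∑ i, ((Matrix.posSemidef_conjTranspose_mul_self A).isHermitian.eigenvalues i) ^ (p / 2))
      (∑ i, ((Matrix.posSemidef_conjTranspose_mul_self B).isHermitian.eigenvalues i) ^ (p / 2))]
      at k
    linarith
end
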